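/- arXiv:2009.02446 — 6 statements merged into one kernel-verified Lean document; each statement's English description precedes it below -/
import Mathlib

section
/- The sum of reciprocals of Fibonacci numbers indexed by powers of two equals (7 - √5)/2, i.e., ∑_{k=0}^∞ 1/F_{2^k} = (7 - √5)/2, where F_1 = F_2 = 1 is the Fibonacci sequence (with F_1 = 1 as the first term, so F_{2^0} = F_1 = 1). -/
open Filter Finset goldenRatio Real

private lemma millin_cassini (n : ℕ) :
    (Nat.fib n : ℤ) * Nat.fib (n + 2) - (Nat.fib (n + 1)) ^ 2 = (-1) ^ (n + 1) := by
  induction n with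
  | zero => simp
  | succ n ih =>
    have h2 : Nat.fib (n + 3) = Nat.fib (n + 1) + Nat.fib (n + 2) := Nat.fib_add_two
    have h1 : Nat.fib (n + 2) = Nat.fib n + Nat.fib (n + 1) := Nat.fib_add_two
    have : ((Nat.fib (n+3) : ℤ)) = Nat.fib (n+1) + Nat.fib (n+2) := by exact_mod_cast h2
    have h1' : ((Nat.fib (n+2) : ℤ)) = Nat.fib n + Nat.fib (n+1) := by exact_mod_cast h1
    show (Nat.fib (n+1) : ℤ) * Nat.fib (n+3) - (Nat.fib (n+2)) ^ 2 = (-1) ^ (n+2)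
    rw [this, pow_succ]
    linear_combination (-1) * ih + (-(Nat.fib (n+2) : ℤ)) * h1'

/-- Key identity: for even `m = 2j+2`,
`fib (m-1) * fib (2m) = fib m * fib (2m-1) + fib m`. -/
private lemma millin_key (j : ℕ) :
    (Nat.fib (2*j+1) : ℤ) * Nat.fib (2*(2*j+2)) =
      Nat.fib (2*j+2) * Nat.fib (2*(2*j+2) - 1) + Nat.fib (2*j+2) := by
  have e1 : 2*(2*j+2) = 2*(2*j+1) + 2 := by ring
  have e2 : 2*(2*j+2) - 1 = 2*(2*j+1) + 1 := by omega
  rw [e2, e1, Nat.fib_two_mul_add_two (2*j+1), Nat.fib_two_mul_add_one (2*j+1)]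
  simp only [show 2*j+1+1 = 2*j+2 from rfl]
  have hc := millin_cassini (2*j)
  have hpow : ((-1 : ℤ)) ^ (2*j+1) = -1 := by
    rw [pow_succ]; simp [pow_mul]
  rw [hpow] at hc
  have h1 : (Nat.fib (2*j+2) : ℤ) = Nat.fib (2*j) + Nat.fib (2*j+1) := by
    exact_mod_cast (Nat.fib_add_two : Nat.fib (2*j+2) = _)
  push_cast
  linear_combination (-(Nat.fib (2*j+2) : ℤ)) * hc + (-(Nat.fib (2*j+2) : ℤ)^2) * h1

private lemma millin_ratio (l : ℕ) :
    (Nat.fib l : ℝ) - Nat.fib (l + 1) / φ = -ψ ^ l / φ := by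
  have h5 : √5 ≠ 0 := by positivity
  have hφ : (φ:ℝ) ≠ 0 := goldenRatio_ne_zero
  rw [Real.coe_fib_eq, Real.coe_fib_eq]
  field_simp
  ring

private lemma millin_fib_pos (n : ℕ) : (0:ℝ) < Nat.fib (2 ^ n) := by
  have : 0 < Nat.fib (2 ^ n) := Nat.fib_pos.mpr (Nat.pow_pos (n := n) (by norm_num))
  exact_mod_cast this

/-- Partial sums: `∑_{k=0}^{n+1} 1/fib(2^k) = 3 - fib(2^{n+1}-1)/fib(2^{n+1})`. -/
private lemma millin_partial (n : ℕ) :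
    ∑ k ∈ Finset.range (n + 2), (1:ℝ) / Nat.fib (2 ^ k) =
      3 - (Nat.fib (2 ^ (n+1) - 1) : ℝ) / Nat.fib (2 ^ (n+1)) := by
  induction n with
  | zero => norm_num [Finset.sum_range_succ]
  | succ n ih =>
    rw [Finset.sum_range_succ, ih]
    set m := 2 ^ (n+1) with hm
    have hm2 : 2 ≤ m := by
      have := Nat.one_lt_two_pow (n := n+1) (by omega)
      omega
    obtain ⟨j, hj⟩ : ∃ j, m = 2*j + 2 := ⟨2^n - 1, by
      have : 2 ^ (n+1) = 2 * 2 ^ n := by ring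
      have h1 : 1 ≤ 2 ^ n := Nat.one_le_two_pow
      omega⟩
    have h2m : 2 ^ (n+2) = 2 * m := by rw [hm]; ring
    have key := millin_key j
    rw [← hj] at key
    have hjm : 2*j+1 = m - 1 := by omega
    rw [hjm] at key
    have keyR : (Nat.fib (m-1) : ℝ) * Nat.fib (2*m) =
        Nat.fib m * Nat.fib (2*m - 1) + Nat.fib m := by exact_mod_cast key
    have hfm : (0:ℝ) < Nat.fib m := millin_fib_pos (n+1)
    have hf2m : (0:ℝ) < Nat.fib (2*m) := by
      rw [← h2m]; exact millin_fib_pos (n+2)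
    rw [h2m]
    field_simp
    nlinarith [keyR, hfm, hf2m]

private lemma millin_limit_const : (3:ℝ) - 1/φ = (7 - √5)/2 := by
  have h1 : (1:ℝ)/φ = -ψ := by rw [one_div, inv_goldenRatio]
  rw [h1]
  unfold goldenConj
  ring

/-- The Millin series: `∑_{k=0}^∞ 1/F_{2^k} = (7 - √5)/2` where `F` is the Fibonacci
sequence with `F_1 = F_2 = 1` (so `F_{2^0} = F_1 = 1`). -/
theorem millin_series :
    ∑' k : ℕ, (1 : ℝ) / (Nat.fib (2 ^ k) : ℝ) = (7 - Real.sqrt 5) / 2 := by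
  have habs : |ψ| < 1 := by
    rw [abs_lt]; constructor
    · exact neg_one_lt_goldenConj
    · linarith [goldenConj_neg]
  have hφ : (0:ℝ) < φ := goldenRatio_pos
  have hform : ∀ n : ℕ, ∑ k ∈ Finset.range (n + 2), (1:ℝ) / Nat.fib (2 ^ k) =
      (7 - √5)/2 + ψ ^ (2^(n+1) - 1) / (φ * Nat.fib (2 ^ (n+1))) := by
    intro n
    rw [millin_partial n, ← millin_limit_const]
    have hfm : (0:ℝ) < Nat.fib (2^(n+1)) := millin_fib_pos (n+1)
    have hl : 2^(n+1) - 1 + 1 = 2^(n+1) := by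
      have : 1 ≤ 2^(n+1) := Nat.one_le_two_pow
      omega
    have hr := millin_ratio (2^(n+1) - 1)
    rw [hl] at hr
    have hA : (Nat.fib (2^(n+1)-1) : ℝ) = Nat.fib (2^(n+1))/φ - ψ^(2^(n+1)-1)/φ := by
      linear_combination hr
    have hφ' : (φ:ℝ) ≠ 0 := goldenRatio_ne_zero
    have hB : ((Nat.fib (2^(n+1)) : ℝ)) ≠ 0 := ne_of_gt hfm
    have : (Nat.fib (2^(n+1)-1) : ℝ) / Nat.fib (2^(n+1)) =
        1/φ - ψ ^ (2^(n+1)-1) / (φ * Nat.fib (2^(n+1))) := by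
      rw [hA]; field_simp
    rw [this]; ring
  -- the error term tends to 0
  have herr : Tendsto (fun n : ℕ => ψ ^ (2^(n+1) - 1) / (φ * Nat.fib (2 ^ (n+1))))
      atTop (nhds 0) := by
    refine squeeze_zero_norm (a := fun n => |ψ| ^ (n+1)) (fun n => ?_) ?_
    ·
      have hfm : (1:ℝ) ≤ Nat.fib (2^(n+1)) := by
        have : 1 ≤ Nat.fib (2^(n+1)) := Nat.fib_pos.mpr (Nat.pow_pos (by norm_num))
        exact_mod_cast this
      have hφ1 : (1:ℝ) ≤ φ := le_of_lt one_lt_goldenRatio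
      have hden : (1:ℝ) ≤ φ * Nat.fib (2^(n+1)) := one_le_mul_of_one_le_of_one_le hφ1 hfm
      have hden : (0:ℝ) < φ * Nat.fib (2^(n+1)) := by positivity
      have heq : ‖ψ ^ (2^(n+1) - 1) / (φ * (Nat.fib (2 ^ (n+1)) : ℝ))‖
          = |ψ| ^ (2^(n+1)-1) / (φ * Nat.fib (2^(n+1))) := by
        rw [norm_div, norm_pow, Real.norm_eq_abs, Real.norm_eq_abs,
          abs_of_pos hden]
      rw [heq]
      have hφ1 : (1:ℝ) ≤ φ * Nat.fib (2^(n+1)) := by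
        have := one_lt_goldenRatio
        nlinarith [hfm]
      calc |ψ| ^ (2^(n+1)-1) / (φ * (Nat.fib (2^(n+1)) : ℝ))
          ≤ |ψ| ^ (2^(n+1)-1) := div_le_self (pow_nonneg (abs_nonneg _) _) hφ1
        _ ≤ |ψ| ^ (n+1) := by
            apply pow_le_pow_of_le_one (abs_nonneg _) (le_of_lt habs)
            have := Nat.lt_two_pow_self (n := n+1)
            omega
    · have h := tendsto_pow_atTop_nhds_zero_of_lt_one (abs_nonneg ψ) habs
      exact h.comp (tendsto_add_atTop_nat 1)
  have hsum : Tendsto (fun N : ℕ => ∑ k ∈ Finset.range N, (1:ℝ) / Nat.fib (2 ^ k))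
      atTop (nhds ((7 - √5)/2)) := by
    rw [← tendsto_add_atTop_iff_nat 2]
    simp only [hform]
    have : Tendsto (fun n : ℕ => (7 - √5)/2 + ψ ^ (2^(n+1) - 1) / (φ * Nat.fib (2 ^ (n+1))))
        atTop (nhds ((7 - √5)/2 + 0)) := tendsto_const_nhds.add herr
    simpa using this
  have hnn : ∀ k : ℕ, (0:ℝ) ≤ 1 / Nat.fib (2 ^ k) := fun k => by positivity
  exact ((hasSum_iff_tendsto_nat_of_nonneg hnn _).mpr hsum).tsum_eq
end

section
/- Let c > 2 and let n_1 < n_2 < ... be positive integers with n_{k+1}/n_k ≥ c for all k. Then the series ∑_{k=1}^∞ 1/F_{n_k} converges to an irrational number. -/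
open goldenRatio Finset

/-- Upper bound: `fib (m+1) ≤ φ ^ m`. -/
lemma aux_fib_le_gold_pow (m : ℕ) : (Nat.fib (m + 1) : ℝ) ≤ φ ^ m := by
  have h := Real.goldenRatio_mul_fib_succ_add_fib m
  have hf : (0:ℝ) ≤ Nat.fib m := Nat.cast_nonneg _
  have hφ := Real.goldenRatio_pos
  have hstep : φ * (Nat.fib (m+1) : ℝ) ≤ φ * φ ^ m := by
    rw [show φ * φ ^ m = φ ^ (m+1) by rw [pow_succ]; ring]
    linarith
  exact le_of_mul_le_mul_left hstep hφ

/-- fib upper bound for all `t`. -/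
lemma aux_fib_le (t : ℕ) : (Nat.fib t : ℝ) ≤ φ ^ t := by
  cases t with
  | zero => simp
  | succ s =>
    calc (Nat.fib (s+1) : ℝ) ≤ φ ^ s := aux_fib_le_gold_pow s
    _ ≤ φ ^ (s+1) := by
        apply pow_le_pow_right₀ Real.one_lt_goldenRatio.le (Nat.le_succ s)

/-- Lower bound: `φ ^ t ≤ φ ^ 2 * fib t` for `t ≥ 1`. -/
lemma aux_gold_pow_le_fib (t : ℕ) (ht : 1 ≤ t) : φ ^ t ≤ φ ^ 2 * (Nat.fib t : ℝ) := by
  obtain ⟨s, rfl⟩ : ∃ s, t = s + 1 := ⟨t - 1, by omega⟩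
  have h := Real.goldenRatio_mul_fib_succ_add_fib s
  have hfm : (Nat.fib s : ℝ) ≤ (Nat.fib (s+1) : ℝ) := by
    exact_mod_cast Nat.fib_le_fib_succ
  have hsq := Real.goldenRatio_sq
  have hφ := Real.goldenRatio_pos
  have h1 : φ ^ (s + 1) ≤ (φ + 1) * (Nat.fib (s+1) : ℝ) := by
    rw [← h]; nlinarith [hfm, hφ]
  calc φ ^ (s + 1) ≤ (φ + 1) * (Nat.fib (s+1) : ℝ) := h1
  _ = φ ^ 2 * (Nat.fib (s+1) : ℝ) := by rw [hsq]

/-- If `c > 2` and `n_1 < n_2 < ...` are positive integers with `n_{k+1}/n_k ≥ c`, then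
`∑_{k=1}^∞ 1/F_{n_k}` is irrational. -/
theorem sum_reciprocal_fib_irrational (c : ℝ) (hc : 2 < c) (n : ℕ → ℕ)
    (hpos : 0 < n 1)
    (hmono : ∀ k, 1 ≤ k → n k < n (k + 1))
    (hratio : ∀ k, 1 ≤ k → c * (n k : ℝ) ≤ (n (k + 1) : ℝ)) :
    Irrational (∑' k : ℕ, (1 : ℝ) / (Nat.fib (n (k + 1)) : ℝ)) := by
  rintro ⟨q, hq⟩
  set f : ℕ → ℝ := fun k => (1 : ℝ) / (Nat.fib (n (k + 1)) : ℝ) with hfdef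
  set m : ℕ → ℕ := fun k => n (k + 1) with hmdef
  have hfm : ∀ k, f k = 1 / (Nat.fib (m k) : ℝ) := fun k => rfl
  have hφ1 : (1:ℝ) < φ := Real.one_lt_goldenRatio
  have hφ0 : (0:ℝ) < φ := Real.goldenRatio_pos
  have hinv0 : (0:ℝ) < 1/φ := by positivity
  have hinv1 : (1:ℝ)/φ < 1 := by rw [div_lt_one hφ0]; exact hφ1
  have hms : ∀ k, m k < m (k+1) := fun k => hmono (k+1) (Nat.le_add_left 1 k)
  have hmlb : ∀ k, k + 1 ≤ m k := by
    intro k; induction k with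
    | zero => exact hpos
    | succ k ih => exact Nat.succ_le_of_lt (lt_of_le_of_lt ih (hms k))
  have hratio' : ∀ k, c * (m k : ℝ) ≤ (m (k+1) : ℝ) :=
    fun k => hratio (k+1) (Nat.le_add_left 1 k)
  have hc0 : (0:ℝ) < c := by linarith
  have hmadd : ∀ K k, m K + k ≤ m (k + K) := by
    intro K k; induction k with
    | zero => simp
    | succ k ih =>
        have h1 := hms (k + K)
        have h2 : k + 1 + K = (k + K) + 1 := by omega
        rw [h2]; omega
  have hfibpos : ∀ k, (0:ℝ) < (Nat.fib (m k) : ℝ) := by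
    intro k
    have h : 0 < Nat.fib (m k) := Nat.fib_pos.mpr (by have := hmlb k; omega)
    exact_mod_cast h
  have hfpos : ∀ k, 0 < f k := fun k => by
    rw [hfm k]; exact one_div_pos.mpr (hfibpos k)
  have hfub : ∀ k, f k ≤ φ ^ 2 * (1/φ) ^ (m k) := by
    intro k
    have hl := aux_gold_pow_le_fib (m k) (by have := hmlb k; omega)
    rw [hfm k, one_div_pow, mul_one_div,
      div_le_div_iff₀ (hfibpos k) (pow_pos hφ0 _), one_mul]
    exact hl
  have hfub' : ∀ k, f k ≤ φ ^ 2 * (1/φ) ^ k := by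
    intro k
    refine (hfub k).trans ?_
    have h1 : (1/φ:ℝ) ^ (m k) ≤ (1/φ) ^ k :=
      pow_le_pow_of_le_one hinv0.le hinv1.le (by have := hmlb k; omega)
    nlinarith [sq_nonneg φ]
  have hgeo : Summable (fun k : ℕ => φ ^ 2 * (1/φ) ^ k) :=
    (summable_geometric_of_lt_one hinv0.le hinv1).mul_left _
  have hsum : Summable f :=
    Summable.of_nonneg_of_le (fun k => (hfpos k).le) hfub' hgeo
  set D : ℝ := φ ^ 2 * (1 - 1/φ)⁻¹ with hD
  have hD0 : 0 < D := mul_pos (by positivity) (inv_pos.mpr (by linarith))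
  have htail : ∀ K, (∑' k, f (k + K)) ≤ D * (1/φ) ^ (m K) := by
    intro K
    have hsum' : Summable (fun k => f (k + K)) := (summable_nat_add_iff K).mpr hsum
    have hb : ∀ k : ℕ, f (k + K) ≤ (φ^2 * (1/φ) ^ (m K)) * (1/φ) ^ k := by
      intro k
      refine (hfub (k + K)).trans ?_
      have h1 : (1/φ:ℝ) ^ (m (k + K)) ≤ (1/φ) ^ (m K + k) :=
        pow_le_pow_of_le_one hinv0.le hinv1.le (hmadd K k)
      calc φ ^ 2 * (1/φ) ^ (m (k+K)) ≤ φ^2 * (1/φ) ^ (m K + k) := by nlinarith [sq_nonneg φ]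
      _ = (φ^2 * (1/φ) ^ (m K)) * (1/φ) ^ k := by rw [pow_add]; ring
    calc (∑' k, f (k + K)) ≤ ∑' k, (φ^2 * (1/φ) ^ (m K)) * (1/φ) ^ k :=
          Summable.tsum_le_tsum hb hsum'
            ((summable_geometric_of_lt_one hinv0.le hinv1).mul_left _)
    _ = (φ^2 * (1/φ) ^ (m K)) * (1-1/φ)⁻¹ := by
          rw [tsum_mul_left, tsum_geometric_of_lt_one hinv0.le hinv1]
    _ = D * (1/φ) ^ (m K) := by rw [hD]; ring
  have htailpos : ∀ K, 0 < ∑' k, f (k + K) := by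
    intro K
    exact Summable.tsum_pos ((summable_nat_add_iff K).mpr hsum) (fun k => (hfpos _).le) 0 (hfpos _)
  have hgrow : ∀ i j, c ^ i * (m j : ℝ) ≤ m (j + i) := by
    intro i j; induction i with
    | zero => simp
    | succ i ih =>
        have h1 : c ^ (i+1) * (m j : ℝ) = c * (c ^ i * m j) := by ring
        rw [h1, show j + (i+1) = (j + i) + 1 from rfl]
        calc c * (c ^ i * (m j:ℝ)) ≤ c * m (j + i) :=
              mul_le_mul_of_nonneg_left ih hc0.le
        _ ≤ m (j + i + 1) := hratio' (j + i)
  have hc1 : (0:ℝ) < c - 1 := by linarith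
  have hδ : 0 < c - c/(c-1) := by
    rw [sub_pos, div_lt_iff₀ (by linarith)]
    nlinarith
  have hkey : ∀ L : ℕ, (∑ j ∈ range (L+1), (m j : ℝ)) + (c - c/(c-1)) * ((L:ℝ)+1)
      ≤ (m (L+1) : ℝ) := by
    intro L
    have h1 : ∀ j ∈ range (L+1), (m j : ℝ) ≤ (1/c) ^ (L - j) * (m L : ℝ) := by
      intro j hj
      have hj' : j ≤ L := by simpa [Nat.lt_succ_iff] using hj
      have h2 := hgrow (L - j) j
      rw [show j + (L - j) = L by omega] at h2
      have hcp : (0:ℝ) < c ^ (L-j) := pow_pos hc0 _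
      rw [one_div_pow, one_div, inv_mul_eq_div, le_div_iff₀ hcp]
      linarith [h2]
    have h2 : (∑ j ∈ range (L+1), (m j:ℝ))
        ≤ (∑ j ∈ range (L+1), (1/c:ℝ)^(L-j)) * (m L:ℝ) := by
      rw [sum_mul]; exact Finset.sum_le_sum h1
    have h3 : (∑ j ∈ range (L+1), (1/c:ℝ)^(L-j)) = ∑ i ∈ range (L+1), (1/c:ℝ)^i := by
      have h := Finset.sum_range_reflect (fun i => (1/c:ℝ)^i) (L+1)
      simpa using h
    have hcinv0 : (0:ℝ) ≤ 1/c := by positivity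
    have hcinv1 : (1:ℝ)/c < 1 := by rw [div_lt_one hc0]; linarith
    have h4 : (∑ i ∈ range (L+1), (1/c:ℝ)^i) ≤ (1 - 1/c)⁻¹ := by
      have hs := summable_geometric_of_lt_one hcinv0 hcinv1
      have hst := Summable.sum_le_tsum (range (L+1)) (fun i _ => by positivity) hs
      rwa [tsum_geometric_of_lt_one hcinv0 hcinv1] at hst
    have he : ((1:ℝ) - 1/c)⁻¹ = c/(c-1) := by
      rw [show (1:ℝ) - 1/c = (c-1)/c by field_simp, inv_div]
    have hmL : ((L:ℝ)+1) ≤ (m L : ℝ) := by exact_mod_cast hmlb L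
    have h5 : c * (m L:ℝ) ≤ m (L+1) := hratio' L
    have h6 : (∑ j ∈ range (L+1), (m j:ℝ)) ≤ c/(c-1) * (m L:ℝ) := by
      rw [h3] at h2
      calc (∑ j ∈ range (L+1), (m j:ℝ))
          ≤ (∑ i ∈ range (L+1), (1/c:ℝ)^i) * (m L:ℝ) := h2
      _ ≤ (1 - 1/c)⁻¹ * (m L:ℝ) :=
          mul_le_mul_of_nonneg_right h4 (Nat.cast_nonneg _)
      _ = c/(c-1) * (m L:ℝ) := by rw [he]
    have h7 : (c - c/(c-1)) * ((L:ℝ)+1) ≤ (c - c/(c-1)) * (m L:ℝ) :=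
      mul_le_mul_of_nonneg_left hmL hδ.le
    have h8 : c/(c-1) * (m L:ℝ) + (c - c/(c-1)) * (m L:ℝ) = c * (m L:ℝ) := by ring
    linarith
  -- choose M and K
  obtain ⟨M, hM⟩ := pow_unbounded_of_one_lt ((q.den:ℝ) * D) hφ1
  obtain ⟨K₀, hK₀⟩ := exists_nat_ge ((M:ℝ) / (c - c/(c-1)))
  have h5 : (M:ℝ) ≤ (c - c/(c-1)) * ((K₀:ℝ)+1) := by
    have h := (div_le_iff₀ hδ).mp hK₀
    nlinarith
  have h6 : (∑ j ∈ range (K₀+1), (m j : ℝ)) + (M:ℝ) ≤ (m (K₀+1) : ℝ) := by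
    have := hkey K₀; linarith
  set K := K₀ + 1 with hK
  set A : ℕ := ∑ j ∈ range K, m j with hA
  have hnat : A + M ≤ m K := by
    have hcast : ((A + M : ℕ) : ℝ) ≤ (m K : ℝ) := by
      push_cast [hA]
      exact h6
    exact_mod_cast hcast
  set P : ℕ := ∏ j ∈ range K, Nat.fib (m j) with hP
  have hPposn : 0 < P := Finset.prod_pos fun j _ => Nat.fib_pos.mpr (by have := hmlb j; omega)
  have hPpos : (0:ℝ) < P := by exact_mod_cast hPposn
  have hPub : (P:ℝ) ≤ φ ^ A := by
    rw [hP, hA, Nat.cast_prod]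
    calc ∏ j ∈ range K, (Nat.fib (m j):ℝ) ≤ ∏ j ∈ range K, φ ^ (m j) :=
      Finset.prod_le_prod (fun j _ => Nat.cast_nonneg _) (fun j _ => aux_fib_le _)
    _ = φ ^ (∑ j ∈ range K, m j) := Finset.prod_pow_eq_pow_sum _ _ _
  set I : ℕ := ∑ j ∈ range K, (P / Nat.fib (m j)) with hI
  have hPS : (I:ℝ) = (P:ℝ) * (∑ j ∈ range K, f j) := by
    rw [hI, Nat.cast_sum, Finset.mul_sum]
    refine Finset.sum_congr rfl fun j hj => ?_
    have hdvd : Nat.fib (m j) ∣ P := by rw [hP]; exact Finset.dvd_prod_of_mem _ hj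
    rw [Nat.cast_div hdvd (by exact_mod_cast (hfibpos j).ne'), hfm j, mul_one_div]
  set T : ℝ := ∑' k, f (k + K) with hT
  have hTpos : 0 < T := htailpos K
  have hsplit : (∑' k, f k) = (∑ j ∈ range K, f j) + T := (Summable.sum_add_tsum_nat_add K hsum).symm
  have hden0 : (0:ℝ) < (q.den:ℝ) := by exact_mod_cast q.pos
  have hq' : (q.den : ℝ) * (∑' k, f k) = (q.num : ℝ) := by
    rw [← hq, Rat.cast_def]
    field_simp
  have e1 : (q.num : ℝ) * P = (q.den:ℝ) * I + (q.den:ℝ) * P * T := by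
    rw [← hq', hsplit, hPS]; ring
  have hone : φ^A * (1/φ:ℝ)^A = 1 := by
    rw [← mul_pow, mul_one_div, div_self hφ0.ne', one_pow]
  have hx1 : (q.den:ℝ) * P * T < 1 := by
    have s2 : (q.den:ℝ) * P * (D * (1/φ)^(m K)) ≤ (q.den:ℝ) * φ^A * (D * (1/φ)^(m K)) := by
      have hnn : (0:ℝ) ≤ D * (1/φ)^(m K) := by positivity
      have := mul_le_mul_of_nonneg_left hPub hden0.le
      exact mul_le_mul_of_nonneg_right this hnn
    have s3 : (1/φ:ℝ)^(m K) ≤ (1/φ)^(A+M) :=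
      pow_le_pow_of_le_one hinv0.le hinv1.le hnat
    calc (q.den:ℝ) * P * T ≤ (q.den:ℝ) * P * (D * (1/φ)^(m K)) :=
          mul_le_mul_of_nonneg_left (htail K) (by positivity)
    _ ≤ (q.den:ℝ) * φ^A * (D * (1/φ)^(m K)) := s2
    _ = ((q.den:ℝ) * D * φ^A) * (1/φ)^(m K) := by ring
    _ ≤ ((q.den:ℝ) * D * φ^A) * (1/φ)^(A+M) :=
        mul_le_mul_of_nonneg_left s3 (by positivity)
    _ = ((q.den:ℝ) * D) * (φ^A * (1/φ)^A) * (1/φ)^M := by rw [pow_add]; ring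
    _ = ((q.den:ℝ) * D) * (1/φ)^M := by rw [hone, mul_one]
    _ < φ^M * (1/φ)^M := mul_lt_mul_of_pos_right hM (by positivity)
    _ = 1 := by rw [← mul_pow, mul_one_div, div_self hφ0.ne', one_pow]
  have hx0 : 0 < (q.den:ℝ) * P * T := mul_pos (mul_pos hden0 hPpos) hTpos
  have hz1 : ((q.num * (P:ℤ) - (q.den:ℤ) * (I:ℤ) : ℤ) : ℝ) = (q.den:ℝ) * P * T := by
    push_cast
    linarith [e1]
  have hzpos : (0:ℤ) < q.num * (P:ℤ) - (q.den:ℤ) * (I:ℤ) := by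
    have h := hz1 ▸ hx0
    exact_mod_cast h
  have hzlt : q.num * (P:ℤ) - (q.den:ℤ) * (I:ℤ) < 1 := by
    have h : ((q.num * (P:ℤ) - (q.den:ℤ) * (I:ℤ) : ℤ):ℝ) < 1 := by rw [hz1]; exact hx1
    exact_mod_cast h
  omega
end

section
/- Let α be a real quadratic unit with |α| > 1 and conjugate β with |β| < 1. Suppose (a_n), (b_n) are sequences in ℚ(α) with a_n·b_n ≠ 0, h(a_n)/n → 0 and h(b_n)/n → 0, and u_n := a_n·α^n - b_n·β^n ∈ ℚ for all n. Then |u_n| = |α|^{n + o(n)} as n → ∞; that is, log|u_n| / n → log|α|. -/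
open IntermediateField Filter Polynomial

/-- The absolute logarithmic Weil height of an algebraic real number, computed from its
minimal polynomial over `ℚ`: if `p` is the monic minimal polynomial of degree `d`, with
`D` the least common multiple of the denominators of its coefficients (so that `D·p` is
the primitive integer minimal polynomial), then
`h(x) = (1/d)·(log D + ∑_{roots z of p in ℂ} log⁺|z|)`. -/
noncomputable def logHeight (x : ℝ) : ℝ :=
  (1 / ((minpoly ℚ x).natDegree : ℝ)) *
    (Real.log (((minpoly ℚ x).support.lcm fun i => ((minpoly ℚ x).coeff i).den : ℕ) : ℝ) +
      (((minpoly ℚ x).aroots ℂ).map fun z => Real.log (max 1 ‖z‖)).sum)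

lemma log_multiset_prod (s : Multiset ℝ) (h : ∀ y ∈ s, 0 < y) :
    Real.log s.prod = (s.map Real.log).sum := by
  induction s using Multiset.induction with
  | empty => simp
  | cons a s ih =>
    have ha : 0 < a := h a (Multiset.mem_cons_self a s)
    have hs : ∀ y ∈ s, 0 < y := fun y hy => h y (Multiset.mem_cons_of_mem hy)
    have hsp : 0 < s.prod := Multiset.prod_pos hs
    simp only [Multiset.prod_cons, Multiset.map_cons, Multiset.sum_cons]
    rw [Real.log_mul ha.ne' hsp.ne', ih hs]

lemma logHeight_log_bounds (x : ℝ) (hx : IsIntegral ℚ x) (h0 : x ≠ 0) :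
    0 ≤ logHeight x ∧
    -(((minpoly ℚ x).natDegree : ℝ) * logHeight x) ≤ Real.log |x| ∧
    Real.log |x| ≤ ((minpoly ℚ x).natDegree : ℝ) * logHeight x := by
  set p := minpoly ℚ x with hp
  have hpne : p ≠ 0 := minpoly.ne_zero hx
  have hdpos : 0 < p.natDegree := minpoly.natDegree_pos hx
  set d : ℝ := (p.natDegree : ℝ) with hd
  have hdpos' : (0:ℝ) < d := by rw [hd]; exact_mod_cast hdpos
  set D : ℕ := (p.support.lcm fun i => (p.coeff i).den) with hD
  set S : ℝ := ((p.aroots ℂ).map fun z => Real.log (max 1 (‖z‖))).sum with hS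
  have hDne : D ≠ 0 := by
    rw [hD, Ne, Finset.lcm_eq_zero_iff]
    rintro ⟨i, -, hi⟩
    exact (p.coeff i).den_nz hi
  have hD1 : 1 ≤ D := Nat.one_le_iff_ne_zero.2 hDne
  have hlogD : 0 ≤ Real.log D := Real.log_nonneg (by exact_mod_cast hD1)
  have hSnn : 0 ≤ S := by
    refine Multiset.sum_nonneg ?_
    intro t ht
    obtain ⟨z, -, rfl⟩ := Multiset.mem_map.1 ht
    exact Real.log_nonneg (le_max_left _ _)
  have hmul : d * logHeight x = Real.log D + S := by
    rw [logHeight]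
    rw [← hp, ← hD, ← hS, ← hd]
    field_simp [hdpos'.ne']
  have hh : 0 ≤ logHeight x := by
    nlinarith [add_nonneg hlogD hSnn]
  -- x is a root
  have hmem : (x : ℂ) ∈ p.aroots ℂ := by
    rw [Polynomial.mem_aroots]
    refine ⟨hpne, ?_⟩
    have : (x : ℂ) = algebraMap ℝ ℂ x := rfl
    rw [this, Polynomial.aeval_algebraMap_apply, hp, minpoly.aeval, map_zero]
  have habs : ‖(x : ℂ)‖ = |x| := by rw [Complex.norm_real, Real.norm_eq_abs]
  -- upper bound
  have hup : Real.log |x| ≤ d * logHeight x := by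
    have h1 : Real.log (max 1 (‖(x:ℂ)‖)) ≤ S := by
      refine Multiset.single_le_sum ?_ _ (Multiset.mem_map_of_mem _ hmem)
      intro t ht
      obtain ⟨z, -, rfl⟩ := Multiset.mem_map.1 ht
      exact Real.log_nonneg (le_max_left _ _)
    have h2 : Real.log |x| ≤ Real.log (max 1 (‖(x:ℂ)‖)) := by
      rw [habs]
      rcases le_or_gt |x| 1 with h | h
      · exact (Real.log_nonpos (abs_nonneg x) h).trans (Real.log_nonneg (le_max_left _ _))
      · exact Real.log_le_log (by positivity) (le_max_right _ _)
    rw [hmul]; linarith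
  refine ⟨hh, ?_, hup⟩
  -- lower bound
  set q := p.map (algebraMap ℚ ℂ) with hq
  have hqmonic : q.Monic := (minpoly.monic hx).map _
  have heq : q = (Multiset.map (fun a => X - C a) q.roots).prod :=
    (IsAlgClosed.splits q).eq_prod_roots_of_monic hqmonic
  have hroots : q.roots = p.aroots ℂ := rfl
  have hev : q.eval 0 = algebraMap ℚ ℂ (p.coeff 0) := by
    rw [hq, Polynomial.eval_map, Polynomial.eval₂_at_zero]
  have hprod : q.eval 0 = (Multiset.map (fun a => -a) q.roots).prod := by
    conv_lhs => rw [heq]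
    rw [Polynomial.eval_multiset_prod, Multiset.map_map]
    congr 1
    refine Multiset.map_congr rfl ?_
    intro z _
    simp
  set p0 : ℚ := p.coeff 0 with hp0
  have hp0ne : p0 ≠ 0 := minpoly.coeff_zero_ne_zero hx h0
  have habs0 : |(p0 : ℝ)| = (Multiset.map (norm : ℂ → ℝ) (p.aroots ℂ)).prod := by
    have hnp : ∀ s : Multiset ℂ, ‖s.prod‖ = (s.map (norm : ℂ → ℝ)).prod :=
      fun s => map_multiset_prod (normHom.toMonoidHom : ℂ →* ℝ) s
    have := congrArg (norm : ℂ → ℝ) (hev.symm.trans hprod)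
    rw [hnp, Multiset.map_map] at this
    have h1 : (norm : ℂ → ℝ) (algebraMap ℚ ℂ p0) = |(p0 : ℝ)| := by
      have : (algebraMap ℚ ℂ p0) = ((p0 : ℝ) : ℂ) := by push_cast; rfl
      rw [this, Complex.norm_real, Real.norm_eq_abs]
    rw [← h1, this, hroots]
    congr 1
    refine Multiset.map_congr rfl ?_
    intro z _
    simp
  have hzpos : ∀ z ∈ p.aroots ℂ, 0 < ‖z‖ := by
    intro z hz
    rcases (norm_nonneg z).lt_or_eq with h | h
    · exact h
    · exfalso
      have hne : |(p0 : ℝ)| ≠ 0 := by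
        simp only [abs_ne_zero, ne_eq, Rat.cast_eq_zero]
        exact hp0ne
      apply hne
      rw [habs0]
      exact Multiset.prod_eq_zero (h ▸ Multiset.mem_map_of_mem _ hz)
  set m := (p.aroots ℂ).erase (x : ℂ) with hm
  have hcons : p.aroots ℂ = (x : ℂ) ::ₘ m := (Multiset.cons_erase hmem).symm
  have hmpos : ∀ y ∈ Multiset.map (norm : ℂ → ℝ) m, 0 < y := by
    intro y hy
    obtain ⟨z, hz, rfl⟩ := Multiset.mem_map.1 hy
    exact hzpos z (Multiset.mem_of_mem_erase hz)
  have hxpos : 0 < |x| := abs_pos.2 h0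
  have habs0' : |(p0 : ℝ)| = |x| * (Multiset.map (norm : ℂ → ℝ) m).prod := by
    rw [habs0, hcons, Multiset.map_cons, Multiset.prod_cons, habs]
  have hlogp : Real.log |(p0 : ℝ)| =
      Real.log |x| + ((Multiset.map (norm : ℂ → ℝ) m).map Real.log).sum := by
    rw [habs0', Real.log_mul hxpos.ne' (Multiset.prod_pos hmpos).ne',
      log_multiset_prod _ hmpos]
  have hT : ((Multiset.map (norm : ℂ → ℝ) m).map Real.log).sum ≤ S := by
    rw [Multiset.map_map]
    have h1 : (Multiset.map (Real.log ∘ (norm : ℂ → ℝ)) m).sum ≤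
        (Multiset.map (fun z => Real.log (max 1 (‖z‖))) m).sum := by
      refine Multiset.sum_map_le_sum_map _ _ ?_
      intro z hz
      exact Real.log_le_log (hzpos z (Multiset.mem_of_mem_erase hz)) (le_max_right _ _)
    have h2 : (Multiset.map (fun z => Real.log (max 1 (‖z‖))) m).sum ≤ S := by
      rw [hS, hcons, Multiset.map_cons, Multiset.sum_cons]
      have : 0 ≤ Real.log (max 1 (‖(x:ℂ)‖)) := Real.log_nonneg (le_max_left _ _)
      linarith
    exact h1.trans h2
  have hDpos : (0:ℝ) < D := by exact_mod_cast Nat.pos_of_ne_zero hDne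
  have hden : p0.den ∣ D := Finset.dvd_lcm (Polynomial.mem_support_iff.2 hp0ne)
  have hdenle : (p0.den : ℝ) ≤ (D : ℝ) := by
    exact_mod_cast Nat.le_of_dvd (Nat.pos_of_ne_zero hDne) hden
  have hdenpos : (0:ℝ) < (p0.den : ℝ) := by exact_mod_cast p0.pos
  have hnum : (1:ℝ) ≤ |(p0.num : ℝ)| := by
    have := Int.one_le_abs (Rat.num_ne_zero.2 hp0ne)
    exact_mod_cast this
  have hmulden : |(p0:ℝ)| * (p0.den : ℝ) = |(p0.num:ℝ)| := by
    have h := congrArg (fun q : ℚ => |(q:ℝ)|) (Rat.mul_den_eq_num p0)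
    push_cast at h
    rwa [abs_mul, abs_of_pos hdenpos] at h
  have hge : 1/(D:ℝ) ≤ |(p0:ℝ)| := by
    rw [div_le_iff₀ hDpos]
    nlinarith [abs_nonneg ((p0:ℝ))]
  have hlogp0 : -Real.log (D:ℝ) ≤ Real.log |(p0:ℝ)| := by
    have h := Real.log_le_log (by positivity) hge
    rwa [one_div, Real.log_inv] at h
  linarith

lemma logHeight_exp_bounds (x : ℝ) (hx : IsIntegral ℚ x) (h0 : x ≠ 0)
    (hd : (minpoly ℚ x).natDegree ≤ 2) :
    Real.exp (-(2 * logHeight x)) ≤ |x| ∧ |x| ≤ Real.exp (2 * logHeight x) := by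
  obtain ⟨hh, hlo, hup⟩ := logHeight_log_bounds x hx h0
  have hd2 : ((minpoly ℚ x).natDegree : ℝ) ≤ 2 := by exact_mod_cast hd
  have hxpos : 0 < |x| := abs_pos.2 h0
  constructor
  · have h1 : -(2 * logHeight x) ≤ Real.log |x| := by nlinarith
    calc Real.exp (-(2 * logHeight x)) ≤ Real.exp (Real.log |x|) := Real.exp_le_exp.2 h1
      _ = |x| := Real.exp_log hxpos
  · have h1 : Real.log |x| ≤ 2 * logHeight x := by nlinarith
    calc |x| = Real.exp (Real.log |x|) := (Real.exp_log hxpos).symm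
      _ ≤ Real.exp (2 * logHeight x) := Real.exp_le_exp.2 h1
/-- Let `α` be a real quadratic unit with conjugate `β`, `|β| < 1 < |α|`. If
`a_n, b_n ∈ ℚ(α)` with `a_n·b_n ≠ 0`, `h(a_n)/n → 0`, `h(b_n)/n → 0`, and
`u_n := a_n·α^n - b_n·β^n ∈ ℚ` for all `n`, then `|u_n| = |α|^{n+o(n)}`, i.e.
`log|u_n|/n → log|α|`. -/
theorem abs_u_growth (α β : ℝ)
    (hint : IsIntegral ℤ α) (hdeg : (minpoly ℚ α).natDegree = 2)
    (hconj : minpoly ℚ β = minpoly ℚ α) (hne : β ≠ α)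
    (hunit : α * β = 1 ∨ α * β = -1) (hβ1 : |β| < 1) (hα1 : 1 < |α|)
    (a b : ℕ → ℝ)
    (hamem : ∀ n, a n ∈ (ℚ⟮α⟯ : IntermediateField ℚ ℝ))
    (hbmem : ∀ n, b n ∈ (ℚ⟮α⟯ : IntermediateField ℚ ℝ))
    (hab : ∀ n, a n * b n ≠ 0)
    (hu : ∀ n : ℕ, ∃ q : ℚ, a n * α ^ n - b n * β ^ n = (q : ℝ))
    (hha : Tendsto (fun n : ℕ => logHeight (a n) / (n : ℝ)) atTop (nhds 0))
    (hhb : Tendsto (fun n : ℕ => logHeight (b n) / (n : ℝ)) atTop (nhds 0)) :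
    Tendsto (fun n : ℕ => Real.log |a n * α ^ n - b n * β ^ n| / (n : ℝ))
      atTop (nhds (Real.log |α|)) := by
  have hQα : IsIntegral ℚ α := hint.tower_top
  have hfd : FiniteDimensional ℚ (ℚ⟮α⟯ : IntermediateField ℚ ℝ) :=
    IntermediateField.adjoin.finiteDimensional hQα
  have key : ∀ x : ℝ, x ∈ (ℚ⟮α⟯ : IntermediateField ℚ ℝ) → x ≠ 0 →
      Real.exp (-(2 * logHeight x)) ≤ |x| ∧ |x| ≤ Real.exp (2 * logHeight x) := by
    intro x hx h0
    have hxa : algebraMap (ℚ⟮α⟯ : IntermediateField ℚ ℝ) ℝ ⟨x, hx⟩ = x := rfl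
    have hmin : minpoly ℚ x = minpoly ℚ (⟨x, hx⟩ : (ℚ⟮α⟯ : IntermediateField ℚ ℝ)) := by
      conv_lhs => rw [← hxa]
      exact minpoly.algebraMap_eq (algebraMap (ℚ⟮α⟯ : IntermediateField ℚ ℝ) ℝ).injective _
    have hxint : IsIntegral ℚ x := by
      rw [← hxa]
      exact (IsIntegral.of_finite ℚ (⟨x, hx⟩ : (ℚ⟮α⟯ : IntermediateField ℚ ℝ))).algebraMap
    have hdle : (minpoly ℚ x).natDegree ≤ 2 := by
      rw [hmin]
      calc (minpoly ℚ (⟨x, hx⟩ : (ℚ⟮α⟯ : IntermediateField ℚ ℝ))).natDegree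
          ≤ Module.finrank ℚ (ℚ⟮α⟯ : IntermediateField ℚ ℝ) := minpoly.natDegree_le _
        _ = (minpoly ℚ α).natDegree := IntermediateField.adjoin.finrank hQα
        _ = 2 := hdeg
    exact logHeight_exp_bounds x hxint h0 hdle
  set A : ℕ → ℝ := fun n => 2 * logHeight (a n) with hAdef
  set B : ℕ → ℝ := fun n => 2 * logHeight (b n) with hBdef
  have ha0 : ∀ n, a n ≠ 0 := fun n => left_ne_zero_of_mul (hab n)
  have hb0 : ∀ n, b n ≠ 0 := fun n => right_ne_zero_of_mul (hab n)
  have hka : ∀ n, Real.exp (-(A n)) ≤ |a n| ∧ |a n| ≤ Real.exp (A n) :=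
    fun n => key _ (hamem n) (ha0 n)
  have hkb : ∀ n, Real.exp (-(B n)) ≤ |b n| ∧ |b n| ≤ Real.exp (B n) :=
    fun n => key _ (hbmem n) (hb0 n)
  have hAnn : ∀ n, 0 ≤ A n := by
    intro n
    have h1 := (hka n).1.trans (hka n).2
    have := Real.exp_le_exp.1 h1
    linarith
  have hBnn : ∀ n, 0 ≤ B n := by
    intro n
    have h1 := (hkb n).1.trans (hkb n).2
    have := Real.exp_le_exp.1 h1
    linarith
  have hAlim : Tendsto (fun n : ℕ => A n / n) atTop (nhds 0) := by
    have := hha.const_mul (2:ℝ)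
    simpa [hAdef, mul_div_assoc] using this
  have hBlim : Tendsto (fun n : ℕ => B n / n) atTop (nhds 0) := by
    have := hhb.const_mul (2:ℝ)
    simpa [hBdef, mul_div_assoc] using this
  have hα0 : (0:ℝ) < |α| := lt_trans one_pos hα1
  set c : ℝ := (|β| + |α|) / 2 with hcdef
  have hβ0 : (0:ℝ) ≤ |β| := abs_nonneg β
  have hc0 : 0 < c := by rw [hcdef]; linarith
  have hβc : |β| ≤ c := by rw [hcdef]; linarith
  have hcα : c < |α| := by rw [hcdef]; linarith
  have hneg : Real.log c - Real.log |α| < 0 := sub_neg.2 (Real.log_lt_log hc0 hcα)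
  have hFlim : Tendsto (fun n : ℕ =>
      (A n + B n + n * Real.log c - n * Real.log |α| - Real.log (1/2)) / n) atTop
      (nhds (Real.log c - Real.log |α|)) := by
    have h1 : Tendsto (fun n : ℕ =>
        A n / n + B n / n + Real.log c - Real.log |α| - Real.log (1/2) / n) atTop
        (nhds (Real.log c - Real.log |α|)) := by
      have := (((hAlim.add hBlim).add_const (Real.log c)).sub_const (Real.log |α|)).sub
        (tendsto_const_div_atTop_nhds_zero_nat (Real.log (1/2)))
      simpa using this
    refine Tendsto.congr' ?_ h1
    filter_upwards [eventually_ge_atTop 1] with n hn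
    have hnpos : (0:ℝ) < n := by exact_mod_cast hn
    field_simp
  have hev1 : ∀ᶠ n : ℕ in atTop,
      (A n + B n + n * Real.log c - n * Real.log |α| - Real.log (1/2)) / n < 0 :=
    hFlim.eventually_lt_const hneg
  have hmain : ∀ᶠ n : ℕ in atTop,
      Real.log (1/2) - A n + n * Real.log |α| ≤ Real.log |a n * α ^ n - b n * β ^ n| ∧
      Real.log |a n * α ^ n - b n * β ^ n| ≤ Real.log 2 + (A n + B n) + n * Real.log |α| := by
    filter_upwards [hev1, eventually_ge_atTop 1] with n hn hn1
    have hnpos : (0:ℝ) < n := by exact_mod_cast hn1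
    have hnum : A n + B n + n * Real.log c - n * Real.log |α| - Real.log (1/2) < 0 := by
      by_contra hcon
      push_neg at hcon
      exact absurd (div_nonneg hcon hnpos.le) (not_le.2 hn)
    have hlin : A n + B n + n * Real.log c ≤ Real.log (1/2) + n * Real.log |α| := by linarith
    have hc_n : |β| ^ n ≤ c ^ n := pow_le_pow_left₀ hβ0 hβc n
    have hexp : Real.exp (A n + B n) * c ^ n ≤ (1/2) * |α| ^ n := by
      have h1 : Real.exp (A n + B n) * c ^ n = Real.exp (A n + B n + n * Real.log c) := by
        rw [Real.exp_add (A n + B n) ((n : ℝ) * Real.log c), Real.exp_nat_mul, Real.exp_log hc0]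
      have h2 : Real.exp (Real.log (1/2) + n * Real.log |α|) = (1/2) * |α| ^ n := by
        rw [Real.exp_add, Real.exp_log (by norm_num : (0:ℝ) < 1/2), Real.exp_nat_mul,
          Real.exp_log hα0]
      rw [h1, ← h2]
      exact Real.exp_le_exp.2 hlin
    have hbb : Real.exp (B n) * |β| ^ n ≤ (1/2) * Real.exp (-(A n)) * |α| ^ n := by
      calc Real.exp (B n) * |β| ^ n
          ≤ Real.exp (B n) * c ^ n := mul_le_mul_of_nonneg_left hc_n (Real.exp_nonneg _)
        _ = Real.exp (-(A n)) * (Real.exp (A n + B n) * c ^ n) := by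
            rw [← mul_assoc, ← Real.exp_add, neg_add_cancel_left]
        _ ≤ Real.exp (-(A n)) * ((1/2) * |α| ^ n) :=
            mul_le_mul_of_nonneg_left hexp (Real.exp_nonneg _)
        _ = (1/2) * Real.exp (-(A n)) * |α| ^ n := by ring
    have hα_pow : (0:ℝ) < |α| ^ n := pow_pos hα0 n
    have hβ_pow : (0:ℝ) ≤ |β| ^ n := pow_nonneg hβ0 n
    have habs1 : |a n| * |α| ^ n - |b n| * |β| ^ n ≤ |a n * α ^ n - b n * β ^ n| := by
      have := abs_sub_abs_le_abs_sub (a n * α ^ n) (b n * β ^ n)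
      rwa [abs_mul, abs_mul, abs_pow, abs_pow] at this
    have hlow : (1/2) * Real.exp (-(A n)) * |α| ^ n ≤ |a n * α ^ n - b n * β ^ n| := by
      have h5 : Real.exp (-(A n)) * |α| ^ n ≤ |a n| * |α| ^ n :=
        mul_le_mul_of_nonneg_right (hka n).1 hα_pow.le
      have h6 : |b n| * |β| ^ n ≤ Real.exp (B n) * |β| ^ n :=
        mul_le_mul_of_nonneg_right (hkb n).2 hβ_pow
      linarith
    have hupos : 0 < |a n * α ^ n - b n * β ^ n| := lt_of_lt_of_le (by positivity) hlow
    constructor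
    · have h7 := Real.log_le_log (by positivity) hlow
      rw [Real.log_mul (by positivity) hα_pow.ne',
        Real.log_mul (by norm_num : (1:ℝ)/2 ≠ 0) (Real.exp_ne_zero _),
        Real.log_exp, Real.log_pow] at h7
      linarith
    · have hup' : |a n * α ^ n - b n * β ^ n| ≤ 2 * Real.exp (A n + B n) * |α| ^ n := by
        have h8 : |a n * α ^ n - b n * β ^ n| ≤ |a n| * |α| ^ n + |b n| * |β| ^ n := by
          have := abs_sub (a n * α ^ n) (b n * β ^ n)
          rwa [abs_mul, abs_mul, abs_pow, abs_pow] at this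
        have h9 : |β| ^ n ≤ |α| ^ n := pow_le_pow_left₀ hβ0 (le_trans hβ1.le hα1.le) n
        have hAe : |a n| ≤ Real.exp (A n + B n) :=
          (hka n).2.trans (Real.exp_le_exp.2 (by linarith [hBnn n]))
        have hBe : |b n| ≤ Real.exp (A n + B n) :=
          (hkb n).2.trans (Real.exp_le_exp.2 (by linarith [hAnn n]))
        calc |a n * α ^ n - b n * β ^ n| ≤ |a n| * |α| ^ n + |b n| * |β| ^ n := h8
          _ ≤ Real.exp (A n + B n) * |α| ^ n + Real.exp (A n + B n) * |α| ^ n :=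
              add_le_add (mul_le_mul_of_nonneg_right hAe hα_pow.le)
                (mul_le_mul hBe h9 hβ_pow (Real.exp_nonneg _))
          _ = 2 * Real.exp (A n + B n) * |α| ^ n := by ring
      have h10 := Real.log_le_log hupos hup'
      rw [Real.log_mul (by positivity) hα_pow.ne',
        Real.log_mul (by norm_num : (2:ℝ) ≠ 0) (Real.exp_ne_zero _),
        Real.log_exp, Real.log_pow] at h10
      linarith
  have hLlim : Tendsto (fun n : ℕ => Real.log (1/2) / n - A n / n + Real.log |α|) atTop
      (nhds (Real.log |α|)) := by
    have := ((tendsto_const_div_atTop_nhds_zero_nat (Real.log (1/2))).sub hAlim).add_const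
      (Real.log |α|)
    simpa using this
  have hUlim : Tendsto (fun n : ℕ => Real.log 2 / n + A n / n + B n / n + Real.log |α|) atTop
      (nhds (Real.log |α|)) := by
    have := (((tendsto_const_div_atTop_nhds_zero_nat (Real.log 2)).add hAlim).add hBlim).add_const
      (Real.log |α|)
    simpa using this
  apply tendsto_of_tendsto_of_tendsto_of_le_of_le' hLlim hUlim
  · filter_upwards [hmain, eventually_ge_atTop 1] with n hmn hn1
    have hnpos : (0:ℝ) < n := by exact_mod_cast hn1
    have he : Real.log (1/2) / n - A n / n + Real.log |α|
        = (Real.log (1/2) - A n + n * Real.log |α|) / n := by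
      field_simp
    rw [he]
    exact (div_le_div_iff_of_pos_right hnpos).2 hmn.1
  · filter_upwards [hmain, eventually_ge_atTop 1] with n hmn hn1
    have hnpos : (0:ℝ) < n := by exact_mod_cast hn1
    have he : Real.log 2 / n + A n / n + B n / n + Real.log |α|
        = (Real.log 2 + (A n + B n) + n * Real.log |α|) / n := by
      field_simp
      ring
    rw [he]
    exact (div_le_div_iff_of_pos_right hnpos).2 hmn.2
end

section
/- Let α be a real quadratic unit with |α| > 1, and suppose u_n = a_n·α^n - b_n·β^n ∈ ℚ with a_n, b_n ∈ ℚ(α)*, h(a_n)/n → 0, h(b_n)/n → 0. Then the multiplicative Weil height satisfies H(u_n) = |α|^{n+o(n)} as n → ∞, i.e., log H(u_n)/n → log|α|. -/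
open IntermediateField Filter

namespace HeightAux

open Polynomial

/-- The lcm of the denominators of the coefficients of the minimal polynomial. -/
noncomputable def pden (x : ℝ) : ℕ :=
  (minpoly ℚ x).support.lcm fun i => ((minpoly ℚ x).coeff i).den

/-- The sum of the positive logs of the absolute values of the complex roots. -/
noncomputable def rsum (x : ℝ) : ℝ :=
  (((minpoly ℚ x).aroots ℂ).map fun z => Real.log (max 1 (‖z‖))).sum

lemma logHeight_eq (x : ℝ) :
    logHeight x = (1 / ((minpoly ℚ x).natDegree : ℝ)) * (Real.log (pden x) + rsum x) := rfl

lemma pden_pos (x : ℝ) : 0 < pden x := by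
  rw [pden, Nat.pos_iff_ne_zero]
  intro h
  rw [Finset.lcm_eq_zero_iff] at h
  obtain ⟨i, -, hi⟩ := h
  exact (Rat.den_nz _) hi

lemma rsum_nonneg (x : ℝ) : 0 ≤ rsum x := by
  apply Multiset.sum_nonneg
  intro r hr
  simp only [Multiset.mem_map] at hr
  obtain ⟨z, -, rfl⟩ := hr
  exact Real.log_nonneg (le_max_left _ _)

lemma logHeight_nonneg (x : ℝ) : 0 ≤ logHeight x := by
  rw [logHeight_eq]
  apply mul_nonneg (by positivity)
  have h1 : (0:ℝ) ≤ Real.log (pden x) :=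
    Real.log_nonneg (by exact_mod_cast (pden_pos x))
  linarith [rsum_nonneg x]

lemma natDegree_mul_logHeight {x : ℝ} (hx : IsIntegral ℚ x) :
    Real.log (pden x) + rsum x = ((minpoly ℚ x).natDegree : ℝ) * logHeight x := by
  have hd : (0:ℝ) < ((minpoly ℚ x).natDegree : ℝ) := by
    exact_mod_cast minpoly.natDegree_pos hx
  rw [logHeight_eq]
  field_simp

lemma mem_aroots_self {x : ℝ} (hx : IsIntegral ℚ x) :
    (x : ℂ) ∈ (minpoly ℚ x).aroots ℂ := by
  rw [Polynomial.mem_aroots]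
  refine ⟨minpoly.ne_zero hx, ?_⟩
  have h : (x : ℂ) = algebraMap ℝ ℂ x := rfl
  rw [h, Polynomial.aeval_algebraMap_apply, minpoly.aeval, map_zero]

lemma log_le_rsum {x : ℝ} (hx : IsIntegral ℚ x) :
    Real.log (max 1 |x|) ≤ rsum x := by
  have hmem := mem_aroots_self hx
  have hmm : Real.log (max 1 (‖(x:ℂ)‖)) ∈
      ((minpoly ℚ x).aroots ℂ).map fun z => Real.log (max 1 (‖z‖)) :=
    Multiset.mem_map_of_mem _ hmem
  have h := Multiset.single_le_sum (s := ((minpoly ℚ x).aroots ℂ).map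
      fun z => Real.log (max 1 (‖z‖))) ?_ _ hmm
  · rwa [Complex.norm_real, Real.norm_eq_abs] at h
  · intro r hr
    simp only [Multiset.mem_map] at hr
    obtain ⟨z, -, rfl⟩ := hr
    exact Real.log_nonneg (le_max_left _ _)

lemma abs_le_of_logHeight {x : ℝ} (hx : IsIntegral ℚ x) :
    |x| ≤ Real.exp (((minpoly ℚ x).natDegree : ℝ) * logHeight x) := by
  have h1 : Real.log (max 1 |x|) ≤ rsum x := log_le_rsum hx
  have h2 : rsum x ≤ ((minpoly ℚ x).natDegree : ℝ) * logHeight x := by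
    rw [← natDegree_mul_logHeight hx]
    have : (0:ℝ) ≤ Real.log (pden x) :=
      Real.log_nonneg (by exact_mod_cast (pden_pos x))
    linarith
  calc |x| ≤ max 1 |x| := le_max_right _ _
    _ = Real.exp (Real.log (max 1 |x|)) := by
        rw [Real.exp_log (lt_of_lt_of_le one_pos (le_max_left _ _))]
    _ ≤ _ := Real.exp_le_exp.mpr (h1.trans h2)

lemma ms_exp (s : Multiset ℂ) :
    (s.map fun z => max 1 (‖z‖)).prod =
      Real.exp ((s.map fun z => Real.log (max 1 (‖z‖))).sum) := by
  induction s using Multiset.induction_on with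
  | empty => simp
  | cons a s ih =>
      simp only [Multiset.map_cons, Multiset.prod_cons, Multiset.sum_cons, Real.exp_add, ih]
      congr 1
      rw [Real.exp_log (lt_of_lt_of_le one_pos (le_max_left _ _))]

lemma ms_prod_nonneg (s : Multiset ℂ) : 0 ≤ (s.map (fun z => ‖z‖)).prod := by
  apply Multiset.prod_nonneg
  intro r hr
  simp only [Multiset.mem_map] at hr
  obtain ⟨z, -, rfl⟩ := hr
  exact norm_nonneg z

lemma ms_le (s : Multiset ℂ) :
    (s.map (fun z => ‖z‖)).prod ≤ (s.map fun z => max 1 (‖z‖)).prod := by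
  induction s using Multiset.induction_on with
  | empty => simp
  | cons a s ih =>
      simp only [Multiset.map_cons, Multiset.prod_cons]
      apply mul_le_mul (le_max_right _ _) ih (ms_prod_nonneg s)
      exact le_trans zero_le_one (le_max_left _ _)

lemma ms_one_le_prod (s : Multiset ℂ) :
    (1:ℝ) ≤ (s.map fun z => max 1 (‖z‖)).prod := by
  induction s using Multiset.induction_on with
  | empty => simp
  | cons a s ih =>
      simp only [Multiset.map_cons, Multiset.prod_cons]
      calc (1:ℝ) = 1 * 1 := (one_mul 1).symm
        _ ≤ _ := mul_le_mul (le_max_left _ _) ih zero_le_one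
            (le_trans zero_le_one (le_max_left _ _))

lemma rat_mul_eq_int {r : ℚ} {D : ℕ} (h : r.den ∣ D) : ∃ z : ℤ, (r * D : ℚ) = z := by
  obtain ⟨t, ht⟩ := h
  refine ⟨r.num * t, ?_⟩
  rw [ht]
  push_cast
  rw [← mul_assoc, Rat.mul_den_eq_num]

lemma one_div_le_abs_rat {r : ℚ} {D : ℕ} (hr : r ≠ 0) (hD : 0 < D) (h : r.den ∣ D) :
    (1:ℝ) / D ≤ |(r : ℝ)| := by
  obtain ⟨z, hz⟩ := rat_mul_eq_int h
  have hz0 : z ≠ 0 := by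
    intro h0
    rw [h0] at hz
    simp only [Int.cast_zero] at hz
    rcases mul_eq_zero.mp hz with h1 | h2
    · exact hr h1
    · exact (by exact_mod_cast hD.ne' : (D:ℚ) ≠ 0) h2
  have h1 : (1:ℝ) ≤ |(r:ℝ)| * D := by
    have h2 : (1:ℝ) ≤ |(z:ℝ)| := by
      exact_mod_cast Int.one_le_abs (by exact_mod_cast hz0)
    have hzr : (z:ℝ) = (r:ℝ) * D := by exact_mod_cast hz.symm
    rw [hzr, abs_mul, abs_of_nonneg (by positivity : (0:ℝ) ≤ (D:ℝ))] at h2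
    exact h2
  rw [div_le_iff₀ (by exact_mod_cast hD)]
  linarith

lemma exp_neg_le_abs {x : ℝ} (hx : IsIntegral ℚ x) (h0 : x ≠ 0) :
    Real.exp (-(Real.log (pden x) + rsum x)) ≤ |x| := by
  classical
  set p := minpoly ℚ x with hp
  set P := p.map (algebraMap ℚ ℂ) with hP
  have hm : P.Monic := (minpoly.monic hx).map _
  have hsp : Splits P := IsAlgClosed.splits P
  have hc := hsp.coeff_zero_eq_prod_roots_of_monic hm
  have habs : ‖P.coeff 0‖ = (P.roots.map (fun z => ‖z‖)).prod := by
    rw [hc]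
    rw [norm_mul, norm_pow, show ‖P.roots.prod‖ = (P.roots.map (fun z => ‖z‖)).prod from
      map_multiset_prod (normHom : ℂ →*₀ ℝ) P.roots]
    simp
  have c0ne : p.coeff 0 ≠ 0 := minpoly.coeff_zero_ne_zero hx h0
  have hdvd : (p.coeff 0).den ∣ pden x :=
    Finset.dvd_lcm (Polynomial.mem_support_iff.mpr c0ne)
  have h1 : (1:ℝ) / (pden x) ≤ ‖P.coeff 0‖ := by
    have he : ‖P.coeff 0‖ = |((p.coeff 0 : ℚ) : ℝ)| := by
      rw [hP, Polynomial.coeff_map]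
      have he2 : (algebraMap ℚ ℂ) (p.coeff 0) = (((p.coeff 0 : ℚ) : ℝ) : ℂ) := by
        push_cast
        norm_cast
      rw [he2, Complex.norm_real, Real.norm_eq_abs]
    rw [he]
    exact one_div_le_abs_rat c0ne (pden_pos x) hdvd
  have hmem : (x:ℂ) ∈ P.roots := by
    have := mem_aroots_self hx
    rwa [Polynomial.aroots_def] at this
  obtain ⟨t, ht⟩ : ∃ t, P.roots = (x:ℂ) ::ₘ t := ⟨_, (Multiset.cons_erase hmem).symm⟩
  have h2 : (P.roots.map (fun z => ‖z‖)).prod ≤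
      |x| * (t.map fun z => max 1 (‖z‖)).prod := by
    rw [ht, Multiset.map_cons, Multiset.prod_cons, Complex.norm_real, Real.norm_eq_abs]
    exact mul_le_mul_of_nonneg_left (ms_le _) (abs_nonneg x)
  have h3 : (t.map fun z => max 1 (‖z‖)).prod ≤
      (P.roots.map fun z => max 1 (‖z‖)).prod := by
    rw [ht, Multiset.map_cons, Multiset.prod_cons]
    exact le_mul_of_one_le_left
      (le_trans zero_le_one (ms_one_le_prod _)) (le_max_left _ _)
  have h4 : (P.roots.map fun z => max 1 (‖z‖)).prod = Real.exp (rsum x) := by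
    rw [ms_exp]
    congr 1
  have h5 : (1:ℝ) / (pden x) ≤ |x| * Real.exp (rsum x) := by
    calc (1:ℝ)/(pden x) ≤ ‖P.coeff 0‖ := h1
      _ = (P.roots.map (fun z => ‖z‖)).prod := habs
      _ ≤ |x| * (t.map fun z => max 1 (‖z‖)).prod := h2
      _ ≤ |x| * (P.roots.map fun z => max 1 (‖z‖)).prod :=
          mul_le_mul_of_nonneg_left h3 (abs_nonneg x)
      _ = |x| * Real.exp (rsum x) := by rw [h4]
  have hDpos : (0:ℝ) < (pden x : ℝ) := by exact_mod_cast pden_pos x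
  rw [neg_add, Real.exp_add, Real.exp_neg, Real.exp_log hDpos]
  calc (pden x : ℝ)⁻¹ * Real.exp (-(rsum x)) = (1 / pden x) * (Real.exp (rsum x))⁻¹ := by
        rw [Real.exp_neg, one_div]
    _ ≤ (|x| * Real.exp (rsum x)) * (Real.exp (rsum x))⁻¹ := by
        apply mul_le_mul_of_nonneg_right h5 (by positivity)
    _ = |x| := by
        rw [mul_assoc, mul_inv_cancel₀ (Real.exp_pos _).ne', mul_one]

lemma pden_mul_isIntegral {x : ℝ} (hx : IsIntegral ℚ x) :
    IsIntegral ℤ ((pden x : ℝ) * x) := by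
  set p := minpoly ℚ x with hp
  set D : ℕ := pden x with hD
  have hlift : p.scaleRoots (D:ℚ) ∈ Polynomial.lifts (algebraMap ℤ ℚ) := by
    rw [Polynomial.lifts_iff_coeff_lifts]
    intro n
    rw [Polynomial.coeff_scaleRoots]
    by_cases hn : n ∈ p.support
    · by_cases hd : n = p.natDegree
      · refine ⟨1, ?_⟩
        rw [hd, tsub_self, pow_zero, mul_one, (minpoly.monic hx).coeff_natDegree]
        simp
      · have hlt : n < p.natDegree :=
          lt_of_le_of_ne (Polynomial.le_natDegree_of_mem_supp _ hn) hd
        have hdvd : (p.coeff n).den ∣ D := Finset.dvd_lcm hn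
        obtain ⟨z, hz⟩ := rat_mul_eq_int hdvd
        refine ⟨z * (D:ℤ) ^ (p.natDegree - n - 1), ?_⟩
        have hsucc : p.natDegree - n = (p.natDegree - n - 1) + 1 := by omega
        rw [hsucc, pow_succ, algebraMap_int_eq, eq_intCast]
        push_cast
        rw [← hz]
        ring
    · refine ⟨0, ?_⟩
      simp [Polynomial.notMem_support_iff.mp hn]
  obtain ⟨Q, hQmap, -, hQmonic⟩ := Polynomial.lifts_and_natDegree_eq_and_monic hlift
      ((Polynomial.monic_scaleRoots_iff _).mpr (minpoly.monic hx))
  refine ⟨Q, hQmonic, ?_⟩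
  have h0 : Polynomial.eval₂ (algebraMap ℚ ℝ) x p = 0 := by
    rw [← Polynomial.aeval_def]; exact minpoly.aeval ℚ x
  have hsr := Polynomial.scaleRoots_eval₂_eq_zero (algebraMap ℚ ℝ) (s := (D:ℚ)) h0
  rw [IsScalarTower.algebraMap_eq ℤ ℚ ℝ, ← Polynomial.eval₂_map, hQmap]
  rw [map_natCast (algebraMap ℚ ℝ)] at hsr
  exact hsr

lemma den_dvd_of_isIntegral {r : ℚ} {N : ℕ} (hN : N ≠ 0)
    (h : IsIntegral ℤ ((N : ℝ) * (r : ℝ))) : r.den ∣ N := by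
  have h1 : IsIntegral ℤ (algebraMap ℚ ℝ ((N:ℚ) * r)) := by
    have he : (algebraMap ℚ ℝ) ((N:ℚ) * r) = (N:ℝ) * (r:ℝ) := by
      rw [eq_ratCast]
      push_cast
      ring
    rw [he]
    exact h
  have h2 : IsIntegral ℤ ((N : ℚ) * r) :=
    (isIntegral_algebraMap_iff (algebraMap ℚ ℝ).injective).mp h1
  obtain ⟨z, hz⟩ := IsIntegrallyClosed.isIntegral_iff.mp h2
  have hr : r = Rat.divInt z (N:ℤ) := by
    rw [Rat.divInt_eq_div]
    have hz' : (z:ℚ) = (N:ℚ) * r := by exact_mod_cast hz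
    rw [hz']
    push_cast
    rw [mul_comm, mul_div_assoc, div_self (by exact_mod_cast hN : ((N:ℚ)) ≠ 0), mul_one]
  have hd := Rat.den_dvd z (N:ℤ)
  rw [← hr] at hd
  exact_mod_cast hd

lemma minpoly_ratCast (r : ℚ) : minpoly ℚ ((r:ℝ)) = X - C r := by
  have h : ((r:ℝ)) = algebraMap ℚ ℝ r := by norm_cast
  rw [h, minpoly.eq_X_sub_C]

lemma pden_ratCast (r : ℚ) (hr : r ≠ 0) : pden (r:ℝ) = r.den := by
  rw [pden, minpoly_ratCast]
  apply Nat.dvd_antisymm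
  · apply Finset.lcm_dvd
    intro i hi
    match i with
    | 0 => simp [coeff_sub, coeff_X, coeff_C]
    | 1 => simp [coeff_sub, coeff_X_one, coeff_C]
    | (n+2) => simp [coeff_sub, coeff_X, coeff_C]
  · have h0 : (0:ℕ) ∈ (X - C r).support := by
      rw [Polynomial.mem_support_iff]
      simp [coeff_sub, coeff_X, coeff_C, hr]
    have hd := Finset.dvd_lcm (f := fun i => ((X - C r).coeff i).den) h0
    simpa [coeff_sub, coeff_X, coeff_C] using hd

lemma logHeight_ratCast (r : ℚ) (hr : r ≠ 0) :
    logHeight (r : ℝ) = Real.log r.den + Real.log (max 1 |(r:ℝ)|) := by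
  have haroots : (minpoly ℚ ((r:ℝ))).aroots ℂ = {((r:ℝ) : ℂ)} := by
    rw [minpoly_ratCast, Polynomial.aroots_def, Polynomial.map_sub, Polynomial.map_X,
      Polynomial.map_C, Polynomial.roots_X_sub_C]
    norm_cast
  have hD : ((minpoly ℚ ((r:ℝ))).support.lcm fun i => ((minpoly ℚ ((r:ℝ))).coeff i).den) = r.den :=
    pden_ratCast r hr
  rw [logHeight, haroots, hD, minpoly_ratCast, Polynomial.natDegree_X_sub_C]
  rw [show ((r:ℝ):ℂ) = ((r:ℚ):ℂ) by norm_cast] at *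
  simp only [Multiset.map_singleton, Multiset.sum_singleton, Nat.cast_one, one_div, inv_one,
    one_mul]
  congr 2
  rw [show ((r:ℚ):ℂ) = ((r:ℝ):ℂ) by norm_cast, Complex.norm_real, Real.norm_eq_abs]

lemma quad_bounds {x : ℝ} (hxi : IsIntegral ℚ x) (hd2 : (minpoly ℚ x).natDegree ≤ 2)
    (hx0 : x ≠ 0) :
    |x| ≤ Real.exp (2 * logHeight x) ∧
    Real.exp (-(2 * logHeight x)) ≤ |x| ∧
    (pden x : ℝ) ≤ Real.exp (2 * logHeight x) := by
  have hh := logHeight_nonneg x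
  have hdle : ((minpoly ℚ x).natDegree : ℝ) * logHeight x ≤ 2 * logHeight x :=
    mul_le_mul_of_nonneg_right (by exact_mod_cast hd2) hh
  have hnd := natDegree_mul_logHeight hxi
  refine ⟨?_, ?_, ?_⟩
  · exact (abs_le_of_logHeight hxi).trans (Real.exp_le_exp.mpr hdle)
  · refine le_trans ?_ (exp_neg_le_abs hxi hx0)
    apply Real.exp_le_exp.mpr
    linarith
  · have h1 : Real.log (pden x) ≤ 2 * logHeight x := by
      linarith [rsum_nonneg x]
    calc (pden x : ℝ) = Real.exp (Real.log (pden x)) :=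
          (Real.exp_log (by exact_mod_cast pden_pos x)).symm
      _ ≤ _ := Real.exp_le_exp.mpr h1

end HeightAux

open HeightAux Polynomial

set_option maxHeartbeats 2000000 in
/-- Let `α` be a real quadratic unit with conjugate `β`, `|β| < 1 < |α|`. If
`u_n = a_n·α^n - b_n·β^n ∈ ℚ` with `a_n, b_n ∈ ℚ(α)^*` and `h(a_n)/n → 0`,
`h(b_n)/n → 0`, then the Weil height satisfies `H(u_n) = |α|^{n+o(n)}`, i.e.
`log H(u_n)/n → log|α|`. -/
theorem height_u_growth (α β : ℝ)
    (hint : IsIntegral ℤ α) (hdeg : (minpoly ℚ α).natDegree = 2)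
    (hconj : minpoly ℚ β = minpoly ℚ α) (hne : β ≠ α)
    (hunit : α * β = 1 ∨ α * β = -1) (hβ1 : |β| < 1) (hα1 : 1 < |α|)
    (a b : ℕ → ℝ)
    (hamem : ∀ n, a n ∈ (ℚ⟮α⟯ : IntermediateField ℚ ℝ))
    (hbmem : ∀ n, b n ∈ (ℚ⟮α⟯ : IntermediateField ℚ ℝ))
    (ha0 : ∀ n, a n ≠ 0) (hb0 : ∀ n, b n ≠ 0)
    (hu : ∀ n : ℕ, ∃ q : ℚ, a n * α ^ n - b n * β ^ n = (q : ℝ))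
    (hha : Tendsto (fun n : ℕ => logHeight (a n) / (n : ℝ)) atTop (nhds 0))
    (hhb : Tendsto (fun n : ℕ => logHeight (b n) / (n : ℝ)) atTop (nhds 0)) :
    Tendsto (fun n : ℕ => logHeight (a n * α ^ n - b n * β ^ n) / (n : ℝ))
      atTop (nhds (Real.log |α|)) := by
  classical
  have hαpos : (0:ℝ) < |α| := lt_trans one_pos hα1
  have hβ0 : β ≠ 0 := by
    intro h
    rw [h, minpoly.zero] at hconj
    rw [← hconj] at hdeg
    simp at hdeg
  have hBpos : (0:ℝ) < |β| := abs_pos.mpr hβ0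
  have hlogA : 0 < Real.log |α| := Real.log_pos hα1
  have hlogB : Real.log |β| < 0 := Real.log_neg hBpos hβ1
  set L := Real.log |α| with hL
  -- β is an algebraic integer
  have hβint : IsIntegral ℤ β := by
    have hmp : minpoly ℚ α = (minpoly ℤ α).map (algebraMap ℤ ℚ) :=
      minpoly.isIntegrallyClosed_eq_field_fractions' ℚ hint
    have h0 : Polynomial.aeval β (minpoly ℤ α) = 0 := by
      have h1 := minpoly.aeval ℚ β
      rw [hconj, hmp, Polynomial.aeval_map_algebraMap] at h1
      exact h1
    exact ⟨minpoly ℤ α, minpoly.monic hint, by rwa [Polynomial.aeval_def] at h0⟩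
  have hαℚ : IsIntegral ℚ α := hint.tower_top
  haveI : FiniteDimensional ℚ (ℚ⟮α⟯ : IntermediateField ℚ ℝ) :=
    IntermediateField.adjoin.finiteDimensional hαℚ
  have hfin : Module.finrank ℚ (ℚ⟮α⟯ : IntermediateField ℚ ℝ) = 2 := by
    rw [IntermediateField.adjoin.finrank hαℚ, hdeg]
  have key : ∀ x : ℝ, x ∈ (ℚ⟮α⟯ : IntermediateField ℚ ℝ) →
      IsIntegral ℚ x ∧ (minpoly ℚ x).natDegree ≤ 2 := by
    intro x hx
    have h1 : IsIntegral ℚ (⟨x, hx⟩ : (ℚ⟮α⟯ : IntermediateField ℚ ℝ)) :=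
      IsIntegral.of_finite ℚ _
    have he : algebraMap (ℚ⟮α⟯ : IntermediateField ℚ ℝ) ℝ ⟨x, hx⟩ = x := rfl
    have hmin := minpoly.algebraMap_eq (A := ℚ)
      (algebraMap (ℚ⟮α⟯ : IntermediateField ℚ ℝ) ℝ).injective
      (⟨x, hx⟩ : (ℚ⟮α⟯ : IntermediateField ℚ ℝ))
    rw [he] at hmin
    constructor
    · rw [← he]
      exact (isIntegral_algebraMap_iff (algebraMap (ℚ⟮α⟯ : IntermediateField ℚ ℝ) ℝ).injective).mpr h1
    · rw [hmin]
      calc (minpoly ℚ ((⟨x, hx⟩ : (ℚ⟮α⟯ : IntermediateField ℚ ℝ)))).natDegree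
          ≤ Module.finrank ℚ (ℚ⟮α⟯ : IntermediateField ℚ ℝ) := minpoly.natDegree_le _
        _ = 2 := hfin
  -- bounds for a n and b n
  have hqa : ∀ n : ℕ, |a n| ≤ Real.exp (2 * logHeight (a n)) ∧
      Real.exp (-(2 * logHeight (a n))) ≤ |a n| ∧
      (pden (a n) : ℝ) ≤ Real.exp (2 * logHeight (a n)) :=
    fun n => quad_bounds (key _ (hamem n)).1 (key _ (hamem n)).2 (ha0 n)
  have hqb : ∀ n : ℕ, |b n| ≤ Real.exp (2 * logHeight (b n)) ∧
      Real.exp (-(2 * logHeight (b n))) ≤ |b n| ∧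
      (pden (b n) : ℝ) ≤ Real.exp (2 * logHeight (b n)) :=
    fun n => quad_bounds (key _ (hbmem n)).1 (key _ (hbmem n)).2 (hb0 n)
  have hanneg : ∀ n : ℕ, 0 ≤ logHeight (a n) := fun n => logHeight_nonneg _
  have hbnneg : ∀ n : ℕ, 0 ≤ logHeight (b n) := fun n => logHeight_nonneg _
  -- the eventual smallness condition
  have htt : Tendsto (fun n : ℕ =>
      (2 * logHeight (a n) + 2 * logHeight (b n) + Real.log 2) / n) atTop (nhds 0) := by
    have heq : (fun n : ℕ => (2 * logHeight (a n) + 2 * logHeight (b n) + Real.log 2) / n)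
        = fun n : ℕ => 2 * (logHeight (a n) / n) + 2 * (logHeight (b n) / n) + Real.log 2 / n := by
      funext n
      ring
    rw [heq]
    have h := ((hha.const_mul 2).add (hhb.const_mul 2)).add
      (tendsto_const_div_atTop_nhds_zero_nat (Real.log 2))
    simpa using h
  have hev1 : ∀ᶠ n : ℕ in atTop,
      (2 * logHeight (a n) + 2 * logHeight (b n) + Real.log 2) / n < L - Real.log |β| :=
    htt.eventually (gt_mem_nhds (by linarith))
  have hev2 : ∀ᶠ n : ℕ in atTop, 1 ≤ n := eventually_ge_atTop 1
  -- the combined eventual double inequality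
  have hkey : ∀ᶠ n : ℕ in atTop,
      L + (-(Real.log 2) - 2 * logHeight (a n)) / n
        ≤ logHeight (a n * α ^ n - b n * β ^ n) / n ∧
      logHeight (a n * α ^ n - b n * β ^ n) / n
        ≤ L + (Real.log 2 + 4 * logHeight (a n) + 4 * logHeight (b n)) / n := by
    filter_upwards [hev1, hev2] with n hS hn
    obtain ⟨q, hq⟩ := hu n
    have npos : (0:ℝ) < (n:ℝ) := by exact_mod_cast hn
    have hexpA : Real.exp ((n:ℝ) * L) = |α| ^ n := by
      rw [hL, ← Real.log_pow, Real.exp_log (by positivity)]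
    have hexpB : Real.exp ((n:ℝ) * Real.log |β|) = |β| ^ n := by
      rw [← Real.log_pow, Real.exp_log (by positivity)]
    have hS' : 2 * logHeight (b n) + n * Real.log |β| + Real.log 2
        ≤ -(2 * logHeight (a n)) + n * L := by
      rw [div_lt_iff₀ npos] at hS
      nlinarith
    -- |b n * β^n| is at most half of the main term
    have hmain : Real.exp (-(2 * logHeight (a n))) * |α| ^ n ≤ |a n * α ^ n| := by
      rw [abs_mul, abs_pow]
      exact mul_le_mul_of_nonneg_right (hqa n).2.1 (by positivity)
    have hbsmall : |b n * β ^ n| ≤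
        (1/2) * (Real.exp (-(2 * logHeight (a n))) * |α| ^ n) := by
      have h1 : |b n * β ^ n| ≤ Real.exp (2 * logHeight (b n) + n * Real.log |β|) := by
        rw [Real.exp_add, hexpB, abs_mul, abs_pow]
        exact mul_le_mul_of_nonneg_right (hqb n).1 (by positivity)
      have h2 : Real.exp (2 * logHeight (b n) + n * Real.log |β|) ≤
          Real.exp (-(Real.log 2) + (-(2 * logHeight (a n)) + n * L)) := by
        apply Real.exp_le_exp.mpr
        linarith
      have h3 : Real.exp (-(Real.log 2) + (-(2 * logHeight (a n)) + n * L))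
          = (1/2) * (Real.exp (-(2 * logHeight (a n))) * |α| ^ n) := by
        rw [Real.exp_add, Real.exp_add, hexpA, Real.exp_neg, Real.exp_log two_pos]
        ring
      rw [h3] at h2
      exact h1.trans h2
    -- lower bound for |u n|
    have hlowu : (1/2) * (Real.exp (-(2 * logHeight (a n))) * |α| ^ n)
        ≤ |a n * α ^ n - b n * β ^ n| := by
      have h3 := abs_sub_abs_le_abs_sub (a n * α ^ n) (b n * β ^ n)
      linarith
    have hupos : (0:ℝ) < |a n * α ^ n - b n * β ^ n| :=
      lt_of_lt_of_le (by positivity) hlowu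
    have hq0 : q ≠ 0 := by
      intro h
      rw [h] at hq
      rw [hq] at hupos
      simp at hupos
    -- upper bound for |u n|
    have hupb : |a n * α ^ n - b n * β ^ n| ≤
        2 * Real.exp (2 * logHeight (a n) + 2 * logHeight (b n)) * |α| ^ n := by
      have hBn1 : |β| ^ n ≤ 1 := pow_le_one₀ (abs_nonneg β) hβ1.le
      have hAn1 : (1:ℝ) ≤ |α| ^ n := one_le_pow₀ hα1.le
      have h1 : |a n * α ^ n| ≤ Real.exp (2 * logHeight (a n)) * |α| ^ n := by
        rw [abs_mul, abs_pow]
        exact mul_le_mul_of_nonneg_right (hqa n).1 (by positivity)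
      have h2 : |b n * β ^ n| ≤ Real.exp (2 * logHeight (b n)) * |α| ^ n := by
        rw [abs_mul, abs_pow]
        calc |b n| * |β| ^ n ≤ Real.exp (2 * logHeight (b n)) * 1 := by
              apply mul_le_mul (hqb n).1 hBn1 (by positivity) (Real.exp_pos _).le
          _ ≤ Real.exp (2 * logHeight (b n)) * |α| ^ n := by
              apply mul_le_mul_of_nonneg_left hAn1 (Real.exp_pos _).le
      have h3 : Real.exp (2 * logHeight (a n)) ≤
          Real.exp (2 * logHeight (a n) + 2 * logHeight (b n)) :=
        Real.exp_le_exp.mpr (by linarith [hbnneg n])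
      have h4 : Real.exp (2 * logHeight (b n)) ≤
          Real.exp (2 * logHeight (a n) + 2 * logHeight (b n)) :=
        Real.exp_le_exp.mpr (by linarith [hanneg n])
      have h5 := abs_sub (a n * α ^ n) (b n * β ^ n)
      have hAn0 : (0:ℝ) ≤ |α| ^ n := by positivity
      calc |a n * α ^ n - b n * β ^ n| ≤ |a n * α ^ n| + |b n * β ^ n| := abs_sub _ _
        _ ≤ Real.exp (2 * logHeight (a n)) * |α| ^ n
            + Real.exp (2 * logHeight (b n)) * |α| ^ n := add_le_add h1 h2
        _ ≤ Real.exp (2 * logHeight (a n) + 2 * logHeight (b n)) * |α| ^ n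
            + Real.exp (2 * logHeight (a n) + 2 * logHeight (b n)) * |α| ^ n :=
            add_le_add (mul_le_mul_of_nonneg_right h3 hAn0)
              (mul_le_mul_of_nonneg_right h4 hAn0)
        _ = 2 * Real.exp (2 * logHeight (a n) + 2 * logHeight (b n)) * |α| ^ n := by ring
    -- denominator bound
    have hNa0 : pden (a n) ≠ 0 := (pden_pos _).ne'
    have hNb0 : pden (b n) ≠ 0 := (pden_pos _).ne'
    have hInt : IsIntegral ℤ (((pden (a n) * pden (b n) : ℕ) : ℝ) * (q : ℝ)) := by
      have heq : (((pden (a n) * pden (b n) : ℕ) : ℝ) * (q : ℝ))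
          = (((pden (a n) : ℝ) * a n) * α ^ n) * (pden (b n) : ℝ)
            - (((pden (b n) : ℝ) * b n) * β ^ n) * (pden (a n) : ℝ) := by
        push_cast
        rw [← hq]
        ring
      rw [heq]
      have w1 : IsIntegral ℤ ((pden (a n) : ℝ) * a n) :=
        pden_mul_isIntegral (key _ (hamem n)).1
      have w2 : IsIntegral ℤ ((pden (b n) : ℝ) * b n) :=
        pden_mul_isIntegral (key _ (hbmem n)).1
      have wa : IsIntegral ℤ (α ^ n) := hint.pow n
      have wb : IsIntegral ℤ (β ^ n) := hβint.pow n
      have da : IsIntegral ℤ ((pden (a n) : ℝ)) := by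
        have : ((pden (a n) : ℝ)) = algebraMap ℤ ℝ (pden (a n) : ℤ) := by push_cast; rfl
        rw [this]
        exact isIntegral_algebraMap
      have db : IsIntegral ℤ ((pden (b n) : ℝ)) := by
        have : ((pden (b n) : ℝ)) = algebraMap ℤ ℝ (pden (b n) : ℤ) := by push_cast; rfl
        rw [this]
        exact isIntegral_algebraMap
      exact ((w1.mul wa).mul db).sub ((w2.mul wb).mul da)
    have hdvd : q.den ∣ pden (a n) * pden (b n) :=
      den_dvd_of_isIntegral (by positivity) hInt
    have hdenle : (q.den : ℝ) ≤
        Real.exp (2 * logHeight (a n)) * Real.exp (2 * logHeight (b n)) := by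
      have h1 : (q.den : ℝ) ≤ ((pden (a n) * pden (b n) : ℕ) : ℝ) := by
        exact_mod_cast Nat.le_of_dvd (by positivity) hdvd
      refine h1.trans ?_
      push_cast
      exact mul_le_mul (hqa n).2.2 (hqb n).2.2 (by positivity) (Real.exp_pos _).le
    have hlogden : Real.log (q.den) ≤ 2 * logHeight (a n) + 2 * logHeight (b n) := by
      have h2 : Real.log (q.den) ≤ Real.log (Real.exp (2 * logHeight (a n))
          * Real.exp (2 * logHeight (b n))) :=
        Real.log_le_log (by exact_mod_cast q.den_pos) hdenle
      rwa [← Real.exp_add, Real.log_exp] at h2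
    have hlogden0 : (0:ℝ) ≤ Real.log (q.den) :=
      Real.log_nonneg (by exact_mod_cast q.den_pos)
    -- log of |u n| bounds
    have habsq : |(q:ℝ)| = |a n * α ^ n - b n * β ^ n| := by rw [hq]
    have hlogmax_low : -(Real.log 2) - 2 * logHeight (a n) + n * L
        ≤ Real.log (max 1 |(q:ℝ)|) := by
      have h1 : Real.log ((1/2) * (Real.exp (-(2 * logHeight (a n))) * |α| ^ n))
          ≤ Real.log (max 1 |(q:ℝ)|) := by
        apply Real.log_le_log (by positivity)
        rw [habsq]
        exact hlowu.trans (le_max_right _ _)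
      have h2 : Real.log ((1/2) * (Real.exp (-(2 * logHeight (a n))) * |α| ^ n))
          = -(Real.log 2) - 2 * logHeight (a n) + n * L := by
        rw [Real.log_mul (by norm_num) (by positivity),
          Real.log_mul (Real.exp_pos _).ne' (by positivity), Real.log_exp, Real.log_pow,
          one_div, Real.log_inv]
        ring
      linarith
    have hlogmax_up : Real.log (max 1 |(q:ℝ)|)
        ≤ Real.log 2 + 2 * logHeight (a n) + 2 * logHeight (b n) + n * L := by
      have hM1 : (1:ℝ) ≤ 2 * Real.exp (2 * logHeight (a n) + 2 * logHeight (b n)) * |α| ^ n := by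
        have e1 : (1:ℝ) ≤ Real.exp (2 * logHeight (a n) + 2 * logHeight (b n)) :=
          Real.one_le_exp (by linarith [hanneg n, hbnneg n])
        have e2 : (1:ℝ) ≤ |α| ^ n := one_le_pow₀ hα1.le
        nlinarith
      have h1 : Real.log (max 1 |(q:ℝ)|) ≤
          Real.log (2 * Real.exp (2 * logHeight (a n) + 2 * logHeight (b n)) * |α| ^ n) := by
        apply Real.log_le_log (by positivity)
        apply max_le hM1
        rw [habsq]
        exact hupb
      have h2 : Real.log (2 * Real.exp (2 * logHeight (a n) + 2 * logHeight (b n)) * |α| ^ n)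
          = Real.log 2 + (2 * logHeight (a n) + 2 * logHeight (b n)) + n * L := by
        rw [Real.log_mul (by positivity) (by positivity),
          Real.log_mul (by norm_num) (Real.exp_pos _).ne', Real.log_exp, Real.log_pow]
      linarith
    -- assemble
    rw [hq, logHeight_ratCast q hq0]
    constructor
    · rw [le_div_iff₀ npos]
      have hexpand : (L + (-(Real.log 2) - 2 * logHeight (a n)) / n) * n
          = n * L + (-(Real.log 2) - 2 * logHeight (a n)) := by
        field_simp
      rw [hexpand]
      linarith
    · rw [div_le_iff₀ npos]
      have hexpand : (L + (Real.log 2 + 4 * logHeight (a n) + 4 * logHeight (b n)) / n) * n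
          = n * L + (Real.log 2 + 4 * logHeight (a n) + 4 * logHeight (b n)) := by
        field_simp
      rw [hexpand]
      linarith
  -- squeeze
  have hglow : Tendsto (fun n : ℕ => L + (-(Real.log 2) - 2 * logHeight (a n)) / n)
      atTop (nhds L) := by
    have heq : (fun n : ℕ => L + (-(Real.log 2) - 2 * logHeight (a n)) / n)
        = fun n : ℕ => L + ((-(Real.log 2)) / n - 2 * (logHeight (a n) / n)) := by
      funext n
      ring
    rw [heq]
    have h := (tendsto_const_div_atTop_nhds_zero_nat (-(Real.log 2))).sub (hha.const_mul 2)
    have h2 := (tendsto_const_nhds : Tendsto (fun _ : ℕ => L) atTop (nhds L)).add h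
    simpa using h2
  have hgup : Tendsto
      (fun n : ℕ => L + (Real.log 2 + 4 * logHeight (a n) + 4 * logHeight (b n)) / n)
      atTop (nhds L) := by
    have heq : (fun n : ℕ => L + (Real.log 2 + 4 * logHeight (a n) + 4 * logHeight (b n)) / n)
        = fun n : ℕ => L + ((Real.log 2) / n + 4 * (logHeight (a n) / n)
            + 4 * (logHeight (b n) / n)) := by
      funext n
      ring
    rw [heq]
    have h := ((tendsto_const_div_atTop_nhds_zero_nat (Real.log 2)).add
      (hha.const_mul 4)).add (hhb.const_mul 4)
    have h2 := (tendsto_const_nhds : Tendsto (fun _ : ℕ => L) atTop (nhds L)).add h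
    simpa using h2
  exact tendsto_of_tendsto_of_tendsto_of_le_of_le' hglow hgup
    (hkey.mono fun n h => h.1) (hkey.mono fun n h => h.2)
end

section
/- In the setting of the main theorem (c > 2, n_{k+1}/n_k ≥ c, u_{n_k}, c_{n_k} ≠ 0, heights of coefficients o(n)), the partial sums s_N = ∑_{k=1}^N c_{n_k}/u_{n_k} satisfy H(s_N) ≤ |α|^{n_1 + ... + n_N + o(n_N)} as N → ∞. -/
open IntermediateField Filter Finset

/-! ### Auxiliary material: heights of rational numbers -/

noncomputable def ratH (q : ℚ) : ℝ := max |(q.num : ℝ)| (q.den : ℝ)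

lemma one_le_ratH (q : ℚ) : 1 ≤ ratH q := le_max_of_le_right (by exact_mod_cast q.pos)

lemma ratH_nonneg (q : ℚ) : 0 ≤ ratH q := le_trans zero_le_one (one_le_ratH q)

lemma num_le_ratH (q : ℚ) : |(q.num : ℝ)| ≤ ratH q := le_max_left _ _
lemma den_le_ratH (q : ℚ) : (q.den : ℝ) ≤ ratH q := le_max_right _ _

lemma ratH_div_le (p q : ℤ) (hq : q ≠ 0) (x : ℚ) (hx : x = (p : ℚ) / q) :
    ratH x ≤ max |(p:ℝ)| |(q:ℝ)| := by
  have hx' : x = Rat.divInt p q := by rw [hx, Rat.divInt_eq_div]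
  have h1 : x.num ∣ p := by rw [hx']; exact Rat.num_dvd _ hq
  have h2 : (x.den : ℤ) ∣ q := by rw [hx']; exact Rat.den_dvd _ _
  have hnum : |x.num| ≤ max |p| |q| := by
    rcases eq_or_ne p 0 with rfl | hp
    · have : x = 0 := by simp [hx]
      simp only [this, Rat.num_zero, Int.cast_zero, abs_zero]
      positivity
    · exact le_max_of_le_left (Int.le_of_dvd (abs_pos.2 hp) ((abs_dvd _ _).mpr ((dvd_abs _ _).mpr h1)))
  have hden : (x.den : ℤ) ≤ max |p| |q| := by
    refine le_max_of_le_right ?_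
    exact Int.le_of_dvd (abs_pos.2 hq) ((dvd_abs _ _).mpr h2)
  unfold ratH
  rw [max_le_iff]
  constructor
  · calc |(x.num:ℝ)| = ((|x.num| : ℤ) : ℝ) := by push_cast; ring
      _ ≤ ((max |p| |q| : ℤ) : ℝ) := by exact_mod_cast hnum
      _ = max |(p:ℝ)| |(q:ℝ)| := by push_cast; rfl
  · calc (x.den : ℝ) = ((x.den : ℤ) : ℝ) := by push_cast; ring
      _ ≤ ((max |p| |q| : ℤ) : ℝ) := by exact_mod_cast hden
      _ = max |(p:ℝ)| |(q:ℝ)| := by push_cast; rfl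

lemma ratH_add_le (x y : ℚ) : ratH (x + y) ≤ 2 * ratH x * ratH y := by
  have hden : ((x.den : ℤ) * y.den : ℤ) ≠ 0 := by positivity
  have hdx : ((x.den : ℚ)) ≠ 0 := by exact_mod_cast x.den_nz
  have hdy : ((y.den : ℚ)) ≠ 0 := by exact_mod_cast y.den_nz
  have hxy : x + y = ((x.num * y.den + y.num * x.den : ℤ) : ℚ) / ((x.den : ℤ) * (y.den : ℤ) : ℤ) := by
    rw [eq_div_iff (by push_cast; positivity)]
    push_cast
    linear_combination (y.den : ℚ) * Rat.mul_den_eq_num x + (x.den : ℚ) * Rat.mul_den_eq_num y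
  refine (ratH_div_le _ _ hden _ hxy).trans ?_
  have h1 : |((x.num * y.den + y.num * x.den : ℤ) : ℝ)| ≤ 2 * ratH x * ratH y := by
    push_cast
    calc |(x.num:ℝ) * y.den + y.num * x.den| ≤ |(x.num:ℝ)| * y.den + |(y.num:ℝ)| * x.den := by
          refine (abs_add_le _ _).trans ?_
          rw [abs_mul, abs_mul, abs_of_nonneg (by positivity : (0:ℝ) ≤ (y.den:ℝ)),
            abs_of_nonneg (by positivity : (0:ℝ) ≤ (x.den:ℝ))]
      _ ≤ ratH x * ratH y + ratH y * ratH x := by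
          refine add_le_add (mul_le_mul (num_le_ratH x) (den_le_ratH y) (by positivity) (ratH_nonneg x)) (mul_le_mul (num_le_ratH y) (den_le_ratH x) (by positivity) (ratH_nonneg y))
      _ = 2 * ratH x * ratH y := by ring
  have h2 : |(((x.den : ℤ) * y.den : ℤ) : ℝ)| ≤ 2 * ratH x * ratH y := by
    push_cast
    rw [abs_of_nonneg (by positivity)]
    calc (x.den:ℝ) * y.den ≤ ratH x * ratH y :=
          mul_le_mul (den_le_ratH x) (den_le_ratH y) (by positivity) (ratH_nonneg x)
      _ ≤ 2 * ratH x * ratH y := by nlinarith [ratH_nonneg x, ratH_nonneg y, one_le_ratH x, one_le_ratH y]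
  exact max_le h1 h2

lemma ratH_div_le2 (x y : ℚ) : ratH (x / y) ≤ ratH x * ratH y := by
  rcases eq_or_ne y 0 with rfl | hy
  · simp only [div_zero]
    have h0 : ratH 0 = 1 := by unfold ratH; norm_num
    rw [h0]
    nlinarith [one_le_ratH x, one_le_ratH (0:ℚ), ratH_nonneg x]
  · have hynum : y.num ≠ 0 := Rat.num_ne_zero.2 hy
    have hden : ((x.den : ℤ) * y.num : ℤ) ≠ 0 := by
      simp [hynum, x.den_nz]
    have hyq : ((y.num : ℚ)) ≠ 0 := by exact_mod_cast hynum
    have hxy : x / y = ((x.num * y.den : ℤ) : ℚ) / ((x.den : ℤ) * y.num : ℤ) := by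
      rw [div_eq_div_iff (hy) (by push_cast; exact mul_ne_zero (show ((x.den:ℚ)) ≠ 0 by exact_mod_cast x.den_nz) hyq)]
      push_cast
      linear_combination (y.num : ℚ) * Rat.mul_den_eq_num x - (x.num : ℚ) * Rat.mul_den_eq_num y
    refine (ratH_div_le _ _ hden _ hxy).trans ?_
    refine max_le ?_ ?_
    · push_cast
      rw [abs_mul, abs_of_nonneg (by positivity : (0:ℝ) ≤ (y.den:ℝ))]
      exact mul_le_mul (num_le_ratH x) (den_le_ratH y) (by positivity) (ratH_nonneg x)
    · push_cast
      rw [abs_mul, abs_of_nonneg (by positivity : (0:ℝ) ≤ (x.den:ℝ))]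
      exact mul_le_mul (den_le_ratH x) (num_le_ratH y) (abs_nonneg _) (ratH_nonneg x)

lemma ratH_sum_le (q : ℕ → ℚ) (N : ℕ) (hN : 1 ≤ N) :
    ratH (∑ k ∈ Finset.Icc 1 N, q k) ≤ 2 ^ N * ∏ k ∈ Finset.Icc 1 N, ratH (q k) := by
  induction N with
  | zero => omega
  | succ N ih =>
    rcases Nat.eq_or_lt_of_le hN with h1 | h1
    · simp [← h1]
      nlinarith [ratH_nonneg (q 1), one_le_ratH (q 1)]
    · have hN' : 1 ≤ N := by omega
      rw [Finset.sum_Icc_succ_top hN, Finset.prod_Icc_succ_top hN]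
      have h1 := ratH_add_le (∑ k ∈ Finset.Icc 1 N, q k) (q (N+1))
      calc ratH (∑ k ∈ Finset.Icc 1 N, q k + q (N+1)) ≤ 2 * ratH (∑ k ∈ Finset.Icc 1 N, q k) * ratH (q (N+1)) := h1
        _ ≤ 2 * (2 ^ N * ∏ k ∈ Finset.Icc 1 N, ratH (q k)) * ratH (q (N+1)) := by
            refine mul_le_mul_of_nonneg_right (mul_le_mul_of_nonneg_left (ih hN') (by norm_num)) (ratH_nonneg _)
        _ = 2 ^ (N+1) * ((∏ k ∈ Finset.Icc 1 N, ratH (q k)) * ratH (q (N+1))) := by ring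

/-! ### logHeight of a rational number -/

open Polynomial in
lemma logHeight_rat (q : ℚ) : logHeight (q : ℝ) = Real.log (ratH q) := by
  have hmp : minpoly ℚ (q : ℝ) = X - C q := by
    have := minpoly.eq_X_sub_C ℝ q
    rwa [show (algebraMap ℚ ℝ) q = (q:ℝ) from by norm_num] at this
  have hdeg : (X - C q : ℚ[X]).natDegree = 1 := natDegree_X_sub_C q
  have hc0 : (X - C q : ℚ[X]).coeff 0 = -q := by simp
  have hc1 : (X - C q : ℚ[X]).coeff 1 = 1 := by simp [coeff_X, coeff_C]
  set D : ℕ := (X - C q : ℚ[X]).support.lcm (fun i => ((X - C q : ℚ[X]).coeff i).den) with hD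
  have hDden : D = q.den := by
    apply Nat.dvd_antisymm
    · apply Finset.lcm_dvd
      intro i hi
      have hile : i ≤ 1 := by
        by_contra h
        push_neg at h
        have := Polynomial.le_natDegree_of_mem_supp i hi
        omega
      interval_cases i
      · rw [hc0]; simp
      · rw [hc1]; simp
    · rcases eq_or_ne q 0 with rfl | hq
      · simp
      · have h0 : (0:ℕ) ∈ (X - C q : ℚ[X]).support := by
          rw [Polynomial.mem_support_iff, hc0]
          simpa using hq
        have := Finset.dvd_lcm (f := fun i => ((X - C q : ℚ[X]).coeff i).den) h0
        simpa only [hc0, Rat.neg_den] using this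
  have haroots : (X - C q : ℚ[X]).aroots ℂ = {(q : ℂ)} := by
    rw [aroots_def, Polynomial.map_sub, Polynomial.map_X, Polynomial.map_C, roots_X_sub_C]
    norm_num
  rw [logHeight, hmp, hdeg, ← hD, hDden, haroots]
  simp only [Multiset.map_singleton, Multiset.sum_singleton]
  have habs : ‖((q : ℂ))‖ = |(q:ℝ)| := by
    rw [show ((q:ℂ)) = ((q:ℝ):ℂ) from by push_cast; norm_num, Complex.norm_real, Real.norm_eq_abs]
  rw [habs]
  have hden_pos : (0:ℝ) < q.den := by exact_mod_cast q.pos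
  have hmax_pos : (0:ℝ) < max 1 |(q:ℝ)| := lt_max_of_lt_left one_pos
  rw [← Real.log_mul (ne_of_gt hden_pos) (ne_of_gt hmax_pos)]
  norm_num
  congr 1
  unfold ratH
  rw [mul_max_of_nonneg _ _ hden_pos.le, mul_one]
  have : (q.den:ℝ) * |(q:ℝ)| = |(q.num:ℝ)| := by
    rw [← abs_of_nonneg hden_pos.le, ← abs_mul]
    congr 1
    rw [mul_comm]
    exact_mod_cast Rat.mul_den_eq_num q
  rw [this, max_comm]

/-! ### Multiset lemmas -/

lemma multiset_one_le_prod (s : Multiset ℝ) (h : ∀ x ∈ s, (1:ℝ) ≤ x) : 1 ≤ s.prod := by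
  induction s using Multiset.induction with
  | empty => simp
  | cons a t ih =>
    rw [Multiset.prod_cons]
    have ha := h a (Multiset.mem_cons_self a t)
    have ht := ih (fun x hx => h x (Multiset.mem_cons_of_mem hx))
    nlinarith

lemma multiset_single_le_prod (s : Multiset ℝ) (h : ∀ x ∈ s, (1:ℝ) ≤ x) (a : ℝ) (ha : a ∈ s) :
    a ≤ s.prod := by
  obtain ⟨t, rfl⟩ := Multiset.exists_cons_of_mem ha
  rw [Multiset.prod_cons]
  have h1 := multiset_one_le_prod t (fun x hx => h x (Multiset.mem_cons_of_mem hx))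
  have ha1 := h a (Multiset.mem_cons_self a t)
  nlinarith

lemma multiset_prod_pos (s : Multiset ℝ) (h : ∀ x ∈ s, (0:ℝ) < x) : 0 < s.prod := by
  induction s using Multiset.induction with
  | empty => simp
  | cons a t ih =>
    rw [Multiset.prod_cons]
    exact mul_pos (h a (Multiset.mem_cons_self a t)) (ih (fun x hx => h x (Multiset.mem_cons_of_mem hx)))

lemma multiset_log_prod (s : Multiset ℝ) (h : ∀ x ∈ s, (0:ℝ) < x) :
    Real.log s.prod = (s.map Real.log).sum := by
  induction s using Multiset.induction with
  | empty => simp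
  | cons a t ih =>
    rw [Multiset.prod_cons, Multiset.map_cons, Multiset.sum_cons,
      Real.log_mul (ne_of_gt (h a (Multiset.mem_cons_self a t)))
        (ne_of_gt (multiset_prod_pos t (fun x hx => h x (Multiset.mem_cons_of_mem hx)))),
      ih (fun x hx => h x (Multiset.mem_cons_of_mem hx))]

/-! ### nonnegativity of logHeight -/

lemma multiset_sum_nonneg (s : Multiset ℝ) (h : ∀ x ∈ s, (0:ℝ) ≤ x) : 0 ≤ s.sum := by
  induction s using Multiset.induction with
  | empty => simp
  | cons a t ih =>
    rw [Multiset.sum_cons]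
    have := h a (Multiset.mem_cons_self a t)
    have := ih (fun x hx => h x (Multiset.mem_cons_of_mem hx))
    linarith

lemma logHeight_nonneg (x : ℝ) : 0 ≤ logHeight x := by
  unfold logHeight
  apply mul_nonneg
  · positivity
  · apply add_nonneg
    · rcases Nat.eq_zero_or_pos ((minpoly ℚ x).support.lcm fun i => ((minpoly ℚ x).coeff i).den) with h | h
      · rw [h]; simp
      · apply Real.log_nonneg
        exact_mod_cast h
    · apply multiset_sum_nonneg
      intro y hy
      obtain ⟨z, _, rfl⟩ := Multiset.mem_map.1 hy
      exact Real.log_nonneg (le_max_left _ _)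

open Polynomial in
lemma den_mul_int (q : ℚ) (m : ℕ) (h : q.den ∣ m) : ∃ z : ℤ, (z : ℚ) = q * m := by
  obtain ⟨t, ht⟩ := h
  refine ⟨q.num * t, ?_⟩
  push_cast [ht]
  rw [← mul_assoc]
  rw [Rat.mul_den_eq_num]

theorem quadBound (x : ℝ) (hx : IsIntegral ℚ x) (hd2 : (minpoly ℚ x).natDegree ≤ 2) :
    ∃ D : ℕ, 1 ≤ D ∧ IsIntegral ℤ ((D:ℝ) * x) ∧ (D:ℝ) ≤ Real.exp (2 * logHeight x) ∧
      |x| ≤ Real.exp (2 * logHeight x) := by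
  set p := minpoly ℚ x with hp
  have hp0 : p ≠ 0 := minpoly.ne_zero hx
  have hmonic : p.Monic := minpoly.monic hx
  set d := p.natDegree with hdd
  have hd1 : 1 ≤ d := Polynomial.natDegree_pos_iff_degree_pos.mpr (minpoly.degree_pos hx)
  set D : ℕ := p.support.lcm (fun i => (p.coeff i).den) with hD
  have hDne : D ≠ 0 := by
    rw [hD, Ne, Finset.lcm_eq_zero_iff]
    intro h
    obtain ⟨i, hi, h0⟩ := h
    exact (p.coeff i).den_nz h0
  have hD1 : 1 ≤ D := Nat.one_le_iff_ne_zero.2 hDne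
  -- coefficient divisibility
  have hdvd : ∀ i ∈ p.support, (p.coeff i).den ∣ D := fun i hi => Finset.dvd_lcm hi
  -- integrality of D * x
  have hint : IsIntegral ℤ ((D:ℝ) * x) := by
    set p' := p.scaleRoots (D : ℚ) with hp'
    have hmono' : p'.Monic := (Polynomial.monic_scaleRoots_iff _).mpr hmonic
    have hlift : ∀ i, ∃ z : ℤ, (z : ℚ) = p'.coeff i := by
      intro i
      rw [hp', Polynomial.coeff_scaleRoots]
      rcases lt_trichotomy i d with h | h | h
      · rcases eq_or_ne (p.coeff i) 0 with h0 | h0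
        · exact ⟨0, by simp [h0]⟩
        · have hi : i ∈ p.support := Polynomial.mem_support_iff.2 h0
          have : (p.coeff i).den ∣ D ^ (d - i) := dvd_trans (hdvd i hi) (dvd_pow_self D (by omega))
          obtain ⟨z, hz⟩ := den_mul_int (p.coeff i) (D ^ (d-i)) this
          exact ⟨z, by rw [hz]; push_cast; ring⟩
      · refine ⟨1, ?_⟩
        rw [h]
        simp [hdd, hmonic.coeff_natDegree]
      · refine ⟨0, ?_⟩
        rw [Polynomial.coeff_eq_zero_of_natDegree_lt (by omega : p.natDegree < i)]
        simp
    have hmem : p' ∈ Polynomial.lifts (algebraMap ℤ ℚ) := by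
      rw [Polynomial.lifts_iff_coeff_lifts]
      intro i
      obtain ⟨z, hz⟩ := hlift i
      exact ⟨z, hz⟩
    obtain ⟨q, hq, hqdeg, hqmonic⟩ := Polynomial.lifts_and_degree_eq_and_monic hmem hmono'
    refine ⟨q, hqmonic, ?_⟩
    have heval : Polynomial.eval₂ (algebraMap ℚ ℝ) ((algebraMap ℚ ℝ (D:ℚ)) * x) p' = 0 :=
      Polynomial.scaleRoots_eval₂_eq_zero (algebraMap ℚ ℝ) (by
        simpa [Polynomial.aeval_def] using minpoly.aeval ℚ x)
    have : Polynomial.eval₂ (algebraMap ℤ ℝ) ((D:ℝ) * x) q = 0 := by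
      have := heval
      rw [show (algebraMap ℚ ℝ) ((D:ℚ)) = (D:ℝ) from by norm_num] at this
      rw [← hq] at this
      rwa [Polynomial.eval₂_map, show (algebraMap ℚ ℝ).comp (algebraMap ℤ ℚ) = algebraMap ℤ ℝ from by ext z <;> simp] at this
    exact this
  -- the height bound
  set S : ℝ := ((p.aroots ℂ).map fun z => Real.log (max 1 ‖z‖)).sum with hS
  set P : ℝ := ((p.aroots ℂ).map fun z => max 1 ‖z‖).prod with hP
  have hP1 : 1 ≤ P := by
    apply multiset_one_le_prod
    intro y hy
    obtain ⟨z, _, rfl⟩ := Multiset.mem_map.1 hy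
    exact le_max_left _ _
  have hlogP : Real.log P = S := by
    rw [hP, multiset_log_prod _ (by
      intro y hy
      obtain ⟨z, _, rfl⟩ := Multiset.mem_map.1 hy
      exact lt_of_lt_of_le zero_lt_one (le_max_left _ _)), Multiset.map_map]
    rfl
  have hDpos : (0:ℝ) < (D:ℝ) := by exact_mod_cast hD1
  have hE : Real.log ((D:ℝ) * P) = (d:ℝ) * logHeight x := by
    rw [Real.log_mul (ne_of_gt hDpos) (ne_of_gt (lt_of_lt_of_le zero_lt_one hP1)), hlogP]
    rw [logHeight, ← hp, ← hdd, ← hD, ← hS]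
    have hdne : (d:ℝ) ≠ 0 := by
      have : (0:ℝ) < (d:ℝ) := by exact_mod_cast hd1
      exact ne_of_gt this
    field_simp
  have hDP1 : 1 ≤ (D:ℝ) * P := by
    calc (1:ℝ) ≤ (D:ℝ) := by exact_mod_cast hD1
      _ = (D:ℝ) * 1 := by ring
      _ ≤ (D:ℝ) * P := by nlinarith
  have hh0 : 0 ≤ logHeight x := by
    by_contra h
    push_neg at h
    have h1 : (d:ℝ) * logHeight x < 0 := by
      have : (0:ℝ) < (d:ℝ) := by exact_mod_cast hd1
      nlinarith
    rw [← hE] at h1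
    have := Real.log_nonneg hDP1
    linarith
  have hEle : (D:ℝ) * P ≤ Real.exp (2 * logHeight x) := by
    have h1 : (D:ℝ) * P = Real.exp ((d:ℝ) * logHeight x) := by
      rw [← hE, Real.exp_log (lt_of_lt_of_le zero_lt_one hDP1)]
    rw [h1]
    apply Real.exp_le_exp.2
    have : (d:ℝ) ≤ 2 := by exact_mod_cast hd2
    nlinarith
  refine ⟨D, hD1, hint, ?_, ?_⟩
  · calc (D:ℝ) = (D:ℝ) * 1 := by ring
      _ ≤ (D:ℝ) * P := by nlinarith
      _ ≤ _ := hEle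
  · -- |x| ≤ ...
    have hmem : (x : ℂ) ∈ p.aroots ℂ := by
      rw [Polynomial.mem_aroots]
      refine ⟨hp0, ?_⟩
      have : (Polynomial.aeval ((algebraMap ℝ ℂ) x)) p = (algebraMap ℝ ℂ) ((Polynomial.aeval x) p) :=
        Polynomial.aeval_algebraMap_apply ℂ x p
      rw [show (algebraMap ℝ ℂ) x = (x:ℂ) from rfl] at this
      rw [this, hp, minpoly.aeval, map_zero]
    have hxP : |x| ≤ P := by
      have h1 : max 1 ‖(x:ℂ)‖ ∈ (p.aroots ℂ).map fun z => max 1 ‖z‖ :=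
        Multiset.mem_map_of_mem _ hmem
      have h2 := multiset_single_le_prod _ (by
        intro y hy
        obtain ⟨z, _, rfl⟩ := Multiset.mem_map.1 hy
        exact le_max_left _ _) _ h1
      rw [Complex.norm_real, Real.norm_eq_abs] at h2
      exact le_trans (le_max_right _ _) h2
    calc |x| ≤ P := hxP
      _ = 1 * P := by ring
      _ ≤ (D:ℝ) * P := by
          have h1 : (1:ℝ) ≤ (D:ℝ) := by exact_mod_cast hD1
          nlinarith
      _ ≤ _ := hEle

lemma mem_quad (α x : ℝ) (hα : IsIntegral ℚ α) (hdeg : (minpoly ℚ α).natDegree = 2)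
    (hx : x ∈ (ℚ⟮α⟯ : IntermediateField ℚ ℝ)) :
    IsIntegral ℚ x ∧ (minpoly ℚ x).natDegree ≤ 2 := by
  haveI : FiniteDimensional ℚ (ℚ⟮α⟯ : IntermediateField ℚ ℝ) :=
    IntermediateField.adjoin.finiteDimensional hα
  set x' : (ℚ⟮α⟯ : IntermediateField ℚ ℝ) := ⟨x, hx⟩ with hx'
  have hinj : Function.Injective (algebraMap (ℚ⟮α⟯ : IntermediateField ℚ ℝ) ℝ) :=
    (algebraMap (ℚ⟮α⟯ : IntermediateField ℚ ℝ) ℝ).injective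
  have hxint : IsIntegral ℚ x' := IsIntegral.of_finite ℚ x'
  have hmp : minpoly ℚ (algebraMap (ℚ⟮α⟯ : IntermediateField ℚ ℝ) ℝ x') = minpoly ℚ x' :=
    minpoly.algebraMap_eq hinj x'
  have hxx : algebraMap (ℚ⟮α⟯ : IntermediateField ℚ ℝ) ℝ x' = x := rfl
  constructor
  · rw [← hxx]
    exact hxint.algebraMap
  · rw [← hxx, hmp]
    have h1 := minpoly.natDegree_le (A := ℚ) x'
    rwa [IntermediateField.adjoin.finrank hα, hdeg] at h1


lemma beta_integral (α β : ℝ) (hint : IsIntegral ℤ α) (hconj : minpoly ℚ β = minpoly ℚ α) : IsIntegral ℤ β := by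
  have h1 : minpoly ℚ α = (minpoly ℤ α).map (algebraMap ℤ ℚ) :=
    minpoly.isIntegrallyClosed_eq_field_fractions ℚ ℝ hint
  refine ⟨minpoly ℤ α, minpoly.monic hint, ?_⟩
  have h2 : Polynomial.aeval β (minpoly ℚ β) = 0 := minpoly.aeval ℚ β
  rw [hconj, h1] at h2
  rw [Polynomial.aeval_def, Polynomial.eval₂_map] at h2
  rwa [show (algebraMap ℚ ℝ).comp (algebraMap ℤ ℚ) = algebraMap ℤ ℝ from by ext z; simp] at h2

lemma term_bound (α β aa bb : ℝ) (Da Db : ℕ) (hDa1 : 1 ≤ Da) (hDb1 : 1 ≤ Db)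
    (hIa : IsIntegral ℤ ((Da:ℝ) * aa)) (hIb : IsIntegral ℤ ((Db:ℝ) * bb))
    (hαint : IsIntegral ℤ α) (hβint : IsIntegral ℤ β)
    (hα1 : 1 ≤ |α|) (hβ1 : |β| ≤ 1) (Ea Eb : ℝ)
    (hDEa : (Da:ℝ) ≤ Ea) (haEa : |aa| ≤ Ea) (hDEb : (Db:ℝ) ≤ Eb) (hbEb : |bb| ≤ Eb)
    (m : ℕ) (q : ℚ) (hq : aa * α ^ m - bb * β ^ m = (q:ℝ)) :
    ratH q ≤ Ea * Eb * (Ea + Eb) * |α| ^ m := by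
  have hEa1 : (1:ℝ) ≤ Ea := le_trans (by exact_mod_cast hDa1) hDEa
  have hEb1 : (1:ℝ) ≤ Eb := le_trans (by exact_mod_cast hDb1) hDEb
  have hαm : (1:ℝ) ≤ |α| ^ m := one_le_pow₀ hα1
  -- integrality of (Da*Db) * q
  have hnat : ∀ k : ℕ, IsIntegral ℤ ((k:ℝ)) := by
    intro k
    have : ((k:ℝ)) = algebraMap ℤ ℝ (k:ℤ) := by simp
    rw [this]
    exact isIntegral_algebraMap
  have hint1 : IsIntegral ℤ (((Da * Db : ℕ):ℝ) * (q:ℝ)) := by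
    have heq : ((Da * Db : ℕ):ℝ) * (q:ℝ) =
        (((Da:ℝ) * aa) * (Db:ℝ)) * α ^ m - ((Da:ℝ) * ((Db:ℝ) * bb)) * β ^ m := by
      rw [← hq]; push_cast; ring
    rw [heq]
    exact ((hIa.mul (hnat Db)).mul (hαint.pow m)).sub (((hnat Da).mul hIb).mul (hβint.pow m))
  -- transfer to ℚ
  have hint2 : IsIntegral ℤ (((Da * Db : ℕ):ℚ) * q) := by
    have : algebraMap ℚ ℝ (((Da * Db : ℕ):ℚ) * q) = ((Da * Db : ℕ):ℝ) * (q:ℝ) := by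
      push_cast; norm_num
    rw [← isIntegral_algebraMap_iff (algebraMap ℚ ℝ).injective, this]
    exact hint1
  obtain ⟨z, hz⟩ := IsIntegrallyClosed.isIntegral_iff.mp hint2
  -- z : ℤ with (z:ℚ) = Da*Db * q
  have hzq : (z:ℚ) = ((Da * Db : ℕ):ℚ) * q := by exact_mod_cast hz
  have hDD0 : ((Da * Db : ℕ):ℚ) ≠ 0 := by positivity
  have hden : (q.den : ℤ) ∣ ((Da * Db : ℕ) : ℤ) := by
    have hqz : q = (z:ℚ) / ((Da*Db:ℕ):ℤ) := by
      rw [eq_div_iff (by exact_mod_cast hDD0)]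
      push_cast
      push_cast at hzq
      linarith [hzq]
    have : q = Rat.divInt z ((Da*Db:ℕ):ℤ) := by
      rw [Rat.divInt_eq_div]
      rw [eq_div_iff (show ((((Da*Db:ℕ):ℤ)):ℚ) ≠ 0 by exact_mod_cast hDD0)]
      rw [mul_comm]
      exact_mod_cast hzq.symm
    rw [this]
    exact Rat.den_dvd _ _
  have hdenle : (q.den : ℝ) ≤ Ea * Eb := by
    have h1 : (q.den : ℤ) ≤ ((Da*Db:ℕ):ℤ) := Int.le_of_dvd (by positivity) hden
    have h2 : (q.den : ℝ) ≤ ((Da:ℝ) * Db) := by exact_mod_cast h1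
    calc (q.den:ℝ) ≤ (Da:ℝ) * Db := h2
      _ ≤ Ea * Eb := by
          apply mul_le_mul hDEa hDEb (by positivity) (by linarith)
  have hqabs : |(q:ℝ)| ≤ (Ea + Eb) * |α| ^ m := by
    rw [← hq]
    calc |aa * α ^ m - bb * β ^ m| ≤ |aa| * |α| ^ m + |bb| * |β| ^ m := by
          refine (abs_sub _ _).trans ?_
          rw [abs_mul, abs_mul, abs_pow, abs_pow]
      _ ≤ Ea * |α| ^ m + Eb * 1 := by
          have hb1 : |β| ^ m ≤ 1 := by
            calc |β| ^ m ≤ 1 ^ m := pow_le_pow_left₀ (abs_nonneg β) hβ1 m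
              _ = 1 := one_pow m
          exact add_le_add (mul_le_mul haEa le_rfl (by positivity) (by linarith))
            (mul_le_mul hbEb hb1 (by positivity) (by linarith))
      _ ≤ Ea * |α| ^ m + Eb * |α| ^ m := by
          exact add_le_add le_rfl (mul_le_mul_of_nonneg_left hαm (by linarith))
      _ = (Ea + Eb) * |α| ^ m := by ring
  have hnum : |(q.num : ℝ)| ≤ Ea * Eb * ((Ea + Eb) * |α| ^ m) := by
    have h1 : |(q.num:ℝ)| = |(q:ℝ)| * q.den := by
      rw [← abs_of_nonneg (show (0:ℝ) ≤ (q.den:ℝ) by positivity), ← abs_mul]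
      congr 1
      push_cast
      exact_mod_cast (Rat.mul_den_eq_num q).symm
    rw [h1, mul_comm (Ea * Eb) _]
    apply mul_le_mul hqabs hdenle (by positivity) (by positivity)
  refine max_le ?_ ?_
  · calc |(q.num:ℝ)| ≤ Ea * Eb * ((Ea + Eb) * |α| ^ m) := hnum
      _ = Ea * Eb * (Ea + Eb) * |α| ^ m := by ring
  · calc (q.den:ℝ) ≤ Ea * Eb := hdenle
      _ = Ea * Eb * 1 := by ring
      _ ≤ Ea * Eb * ((Ea + Eb) * |α| ^ m) := by
          apply mul_le_mul_of_nonneg_left _ (by positivity)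
          calc (1:ℝ) ≤ (Ea + Eb) := by linarith
            _ = (Ea+Eb) * 1 := by ring
            _ ≤ (Ea+Eb) * |α|^m := by
                apply mul_le_mul_of_nonneg_left hαm (by linarith)
      _ = Ea * Eb * (Ea + Eb) * |α| ^ m := by ring

lemma analytic_bound (G : ℕ → ℝ) (hG0 : ∀ m, 0 ≤ G m)
    (hGt : Tendsto (fun m : ℕ => G m / (m:ℝ)) atTop (nhds 0))
    (c : ℝ) (hc : 2 < c) (n : ℕ → ℕ) (hpos : 0 < n 1)
    (hmono : ∀ k, 1 ≤ k → n k < n (k+1))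
    (hratio : ∀ k, 1 ≤ k → c * (n k : ℝ) ≤ (n (k+1) : ℝ))
    (ε' : ℝ) (hε' : 0 < ε') :
    ∀ᶠ N in atTop, (∑ k ∈ Finset.Icc 1 N, G (n k)) ≤ ε' * (n N : ℝ) := by
  have hmono' : ∀ j k, 1 ≤ j → j ≤ k → n j ≤ n k := by
    intro j k hj hjk
    induction k with
    | zero => omega
    | succ k ih =>
      rcases Nat.eq_or_lt_of_le hjk with h | h
      · rw [h]
      · have hjk' : j ≤ k := by omega
        have h1k : 1 ≤ k := le_trans hj hjk'
        exact le_trans (ih hjk') (hmono k h1k).le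
  have hk_le : ∀ k, 1 ≤ k → k ≤ n k := by
    intro k hk
    induction k with
    | zero => omega
    | succ k ih =>
      rcases Nat.eq_or_lt_of_le hk with h | h
      · have hk0 : k = 0 := by omega
        subst hk0
        exact hpos
      · have h1 : 1 ≤ k := by omega
        have := hmono k h1
        have := ih h1
        omega
  have hntend : Tendsto (fun N => (n N : ℝ)) atTop atTop := by
    apply tendsto_atTop_mono' atTop (show ∀ᶠ N : ℕ in atTop, (N:ℝ) ≤ (n N : ℝ) by
      filter_upwards [eventually_ge_atTop 1] with N hN
      exact_mod_cast hk_le N hN)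
    exact tendsto_natCast_atTop_atTop
  have hsum2 : ∀ N, 1 ≤ N → (∑ k ∈ Finset.Icc 1 N, (n k : ℝ)) ≤ 2 * (n N : ℝ) := by
    intro N hN
    induction N with
    | zero => omega
    | succ N ih =>
      rcases Nat.eq_or_lt_of_le hN with h | h
      · rw [← h]
        norm_num
        have : (0:ℝ) ≤ (n 1 : ℝ) := by positivity
        linarith
      · have hN1 : 1 ≤ N := by omega
        rw [Finset.sum_Icc_succ_top hN]
        have h1 := hratio N hN1
        have h2 : (0:ℝ) ≤ (n N : ℝ) := by positivity
        have h3 : 2 * (n N : ℝ) ≤ (n (N+1) : ℝ) := by nlinarith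
        linarith [ih hN1]
  set δ : ℝ := ε' / 4 with hδ
  have hδpos : 0 < δ := by positivity
  have hev : ∀ᶠ m in atTop, G m / (m:ℝ) < δ := hGt.eventually_lt_const hδpos
  obtain ⟨M, hM⟩ := eventually_atTop.mp hev
  set K := max M 1 with hK
  have hK1 : 1 ≤ K := le_max_right _ _
  set C := ∑ k ∈ Finset.Icc 1 K, G (n k) with hC
  have hGδ : ∀ m, M ≤ m → 1 ≤ m → G m ≤ δ * m := by
    intro m h1 h2
    have := hM m h1
    have hm : (0:ℝ) < (m:ℝ) := by exact_mod_cast h2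
    rw [div_lt_iff₀ hm] at this
    linarith
  have hCev : ∀ᶠ N in atTop, C ≤ (ε'/2) * (n N : ℝ) := by
    have := hntend.eventually_ge_atTop (C / (ε'/2))
    filter_upwards [this] with N hN
    rw [div_le_iff₀ (by positivity)] at hN
    linarith
  filter_upwards [eventually_ge_atTop K, hCev] with N hNK hCN
  -- split the sum
  have hsplit : (∑ k ∈ Finset.Icc 1 N, G (n k)) =
      (∑ k ∈ Finset.Icc 1 K, G (n k)) + ∑ k ∈ Finset.Ioc K N, G (n k) := by
    have e : ∀ m : ℕ, Finset.Icc 1 m = Finset.Ioc 0 m := fun m => by rw [← Finset.Icc_add_one_left_eq_Ioc]; rfl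
    rw [e N, e K]
    exact (Finset.sum_Ioc_consecutive _ (Nat.zero_le K) hNK).symm
  rw [hsplit]
  have htail : (∑ k ∈ Finset.Ioc K N, G (n k)) ≤ (ε'/2) * (n N : ℝ) := by
    have h1 : (∑ k ∈ Finset.Ioc K N, G (n k)) ≤ ∑ k ∈ Finset.Ioc K N, δ * (n k : ℝ) := by
      apply Finset.sum_le_sum
      intro k hk
      rw [Finset.mem_Ioc] at hk
      have hk1 : 1 ≤ k := by omega
      have hnkM : M ≤ n k := by
        calc M ≤ K := le_max_left _ _
          _ ≤ n K := hk_le K hK1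
          _ ≤ n k := hmono' K k hK1 hk.1.le
      have hnk1 : 1 ≤ n k := le_trans (hk_le 1 le_rfl) (hmono' 1 k le_rfl hk1)
      exact hGδ (n k) hnkM hnk1
    have h2 : (∑ k ∈ Finset.Ioc K N, δ * (n k : ℝ)) = δ * ∑ k ∈ Finset.Ioc K N, (n k : ℝ) := by
      rw [Finset.mul_sum]
    have h3 : (∑ k ∈ Finset.Ioc K N, (n k : ℝ)) ≤ ∑ k ∈ Finset.Icc 1 N, (n k : ℝ) := by
      apply Finset.sum_le_sum_of_subset_of_nonneg
      · intro k hk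
        rw [Finset.mem_Ioc] at hk
        rw [Finset.mem_Icc]
        omega
      · intro k _ _
        positivity
    have h4 := hsum2 N (le_trans hK1 hNK)
    calc (∑ k ∈ Finset.Ioc K N, G (n k)) ≤ δ * ∑ k ∈ Finset.Ioc K N, (n k : ℝ) := by rw [← h2]; exact h1
      _ ≤ δ * (2 * (n N:ℝ)) := by
          apply mul_le_mul_of_nonneg_left _ hδpos.le
          linarith
      _ = (ε'/2) * (n N : ℝ) := by rw [hδ]; ring
  linarith

/-- In the setting of the main theorem (`α` a real quadratic unit with conjugate `β`,
`|β| < 1 < |α|`, `u_n = a_n α^n - b_n β^n ∈ ℚ`, heights of `a_n, b_n, c_n` of size `o(n)`,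
`n_{k+1}/n_k ≥ c > 2`, `u_{n_k} ≠ 0 ≠ c_{n_k}`), the partial sums
`s_N = ∑_{k=1}^N c_{n_k}/u_{n_k}` satisfy `H(s_N) ≤ |α|^{n_1+...+n_N+o(n_N)}`:
for every `ε > 0`, eventually `h(s_N) ≤ (n_1+...+n_N+ε·n_N)·log|α|`. -/
theorem partial_sum_height_bound (α β : ℝ)
    (hint : IsIntegral ℤ α) (hdeg : (minpoly ℚ α).natDegree = 2)
    (hconj : minpoly ℚ β = minpoly ℚ α) (hne : β ≠ α)
    (hunit : α * β = 1 ∨ α * β = -1) (hβ1 : |β| < 1) (hα1 : 1 < |α|)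
    (a b : ℕ → ℝ) (cseq : ℕ → ℚ)
    (hamem : ∀ m, a m ∈ (ℚ⟮α⟯ : IntermediateField ℚ ℝ))
    (hbmem : ∀ m, b m ∈ (ℚ⟮α⟯ : IntermediateField ℚ ℝ))
    (hu : ∀ m : ℕ, ∃ q : ℚ, a m * α ^ m - b m * β ^ m = (q : ℝ))
    (hha : Tendsto (fun m : ℕ => logHeight (a m) / (m : ℝ)) atTop (nhds 0))
    (hhb : Tendsto (fun m : ℕ => logHeight (b m) / (m : ℝ)) atTop (nhds 0))
    (hhc : Tendsto (fun m : ℕ => logHeight ((cseq m : ℝ)) / (m : ℝ)) atTop (nhds 0))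
    (c : ℝ) (hc : 2 < c) (n : ℕ → ℕ)
    (hpos : 0 < n 1)
    (hmono : ∀ k, 1 ≤ k → n k < n (k + 1))
    (hratio : ∀ k, 1 ≤ k → c * (n k : ℝ) ≤ (n (k + 1) : ℝ))
    (hune : ∀ k, 1 ≤ k → a (n k) * α ^ (n k) - b (n k) * β ^ (n k) ≠ 0)
    (hcne : ∀ k, 1 ≤ k → cseq (n k) ≠ 0) :
    ∀ ε > (0 : ℝ), ∀ᶠ N in atTop,
      logHeight (∑ k ∈ Finset.Icc 1 N,
          (cseq (n k) : ℝ) / (a (n k) * α ^ (n k) - b (n k) * β ^ (n k))) ≤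
        ((∑ k ∈ Finset.Icc 1 N, (n k : ℝ)) + ε * (n N : ℝ)) * Real.log |α| := by
  have hαQ : IsIntegral ℚ α := hint.tower_top
  have hβZ : IsIntegral ℤ β := beta_integral α β hint hconj
  have hL : 0 < Real.log |α| := Real.log_pos hα1
  set L := Real.log |α| with hLdef
  have hα1' : 1 ≤ |α| := hα1.le
  have hβ1' : |β| ≤ 1 := hβ1.le
  have hαpos : (0:ℝ) < |α| := lt_trans zero_lt_one hα1
  choose v hv using hu
  -- per-term bound on the height of the rational number `v m`
  have key : ∀ m : ℕ, Real.log (ratH (v m)) ≤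
      4 * logHeight (a m) + 4 * logHeight (b m) + Real.log 2 + (m:ℝ) * L := by
    intro m
    obtain ⟨haint, hadeg⟩ := mem_quad α (a m) hαQ hdeg (hamem m)
    obtain ⟨hbint, hbdeg⟩ := mem_quad α (b m) hαQ hdeg (hbmem m)
    obtain ⟨Da, hDa1, hIa, hDEa, haEa⟩ := quadBound (a m) haint hadeg
    obtain ⟨Db, hDb1, hIb, hDEb, hbEb⟩ := quadBound (b m) hbint hbdeg
    set Ea := Real.exp (2 * logHeight (a m)) with hEadef
    set Eb := Real.exp (2 * logHeight (b m)) with hEbdef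
    have hEa1 : (1:ℝ) ≤ Ea := le_trans (by exact_mod_cast hDa1) hDEa
    have hEb1 : (1:ℝ) ≤ Eb := le_trans (by exact_mod_cast hDb1) hDEb
    have h1 := term_bound α β (a m) (b m) Da Db hDa1 hDb1 hIa hIb hint hβZ hα1' hβ1'
      Ea Eb hDEa haEa hDEb hbEb m (v m) (hv m)
    have h2 : ratH (v m) ≤ 2 * (Ea*Ea) * (Eb*Eb) * |α| ^ m := by
      have hmid : Ea * Eb * (Ea + Eb) ≤ 2 * (Ea*Ea) * (Eb*Eb) := by
        nlinarith [mul_le_mul_of_nonneg_left hEb1 (show (0:ℝ) ≤ Ea*Ea*Eb by positivity),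
          mul_le_mul_of_nonneg_left hEa1 (show (0:ℝ) ≤ Ea*Eb*Eb by positivity)]
      calc ratH (v m) ≤ Ea * Eb * (Ea + Eb) * |α|^m := h1
        _ ≤ 2*(Ea*Ea)*(Eb*Eb)*|α|^m :=
            mul_le_mul_of_nonneg_right hmid (by positivity)
    have hratHpos : (0:ℝ) < ratH (v m) := lt_of_lt_of_le zero_lt_one (one_le_ratH (v m))
    have h3 : Real.log (ratH (v m)) ≤ Real.log (2 * (Ea*Ea) * (Eb*Eb) * |α| ^ m) :=
      Real.log_le_log hratHpos h2
    have hEapos : (0:ℝ) < Ea := Real.exp_pos _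
    have hEbpos : (0:ℝ) < Eb := Real.exp_pos _
    have h4 : Real.log (2 * (Ea*Ea) * (Eb*Eb) * |α| ^ m) =
        Real.log 2 + 2 * Real.log Ea + 2 * Real.log Eb + (m:ℝ) * L := by
      rw [Real.log_mul (by positivity) (pow_ne_zero m (ne_of_gt hαpos)),
        Real.log_mul (by positivity) (by positivity),
        Real.log_mul (by positivity) (by positivity),
        Real.log_mul (ne_of_gt hEapos) (ne_of_gt hEapos),
        Real.log_mul (ne_of_gt hEbpos) (ne_of_gt hEbpos),
        Real.log_pow]
      push_cast
      ring
    have h5 : Real.log Ea = 2 * logHeight (a m) := Real.log_exp _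
    have h6 : Real.log Eb = 2 * logHeight (b m) := Real.log_exp _
    calc Real.log (ratH (v m)) ≤ Real.log (2 * (Ea*Ea) * (Eb*Eb) * |α| ^ m) := h3
      _ = Real.log 2 + 2 * Real.log Ea + 2 * Real.log Eb + (m:ℝ) * L := h4
      _ = 4 * logHeight (a m) + 4 * logHeight (b m) + Real.log 2 + (m:ℝ) * L := by
          rw [h5, h6]; ring
  -- the o(n) term
  set G : ℕ → ℝ := fun m =>
    logHeight ((cseq m : ℝ)) + 4 * logHeight (a m) + 4 * logHeight (b m) + 2 * Real.log 2
    with hGdef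
  have hG0 : ∀ m, 0 ≤ G m := by
    intro m
    have h1 := logHeight_nonneg ((cseq m : ℝ))
    have h2 := logHeight_nonneg (a m)
    have h3 := logHeight_nonneg (b m)
    have h4 : (0:ℝ) ≤ Real.log 2 := Real.log_nonneg (by norm_num)
    simp only [hGdef]
    linarith
  have hGt : Tendsto (fun m : ℕ => G m / (m:ℝ)) atTop (nhds 0) := by
    have heq : (fun m : ℕ => G m / (m:ℝ)) = fun m : ℕ =>
        logHeight ((cseq m : ℝ)) / m + 4 * (logHeight (a m) / m) + 4 * (logHeight (b m) / m)
          + (2 * Real.log 2) / m := by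
      funext m
      simp only [hGdef]
      ring
    rw [heq]
    have t1 : Tendsto (fun m : ℕ => 4 * (logHeight (a m) / (m:ℝ))) atTop (nhds 0) := by
      simpa using hha.const_mul 4
    have t2 : Tendsto (fun m : ℕ => 4 * (logHeight (b m) / (m:ℝ))) atTop (nhds 0) := by
      simpa using hhb.const_mul 4
    have t3 : Tendsto (fun m : ℕ => (2 * Real.log 2) / (m:ℝ)) atTop (nhds 0) :=
      Tendsto.div_atTop tendsto_const_nhds tendsto_natCast_atTop_atTop
    simpa using ((hhc.add t1).add t2).add t3
  intro ε hε
  have hana := analytic_bound G hG0 hGt c hc n hpos hmono hratio (ε * L) (by positivity)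
  filter_upwards [hana, eventually_ge_atTop 1] with N hGN h1N
  -- rewrite the sum as a rational number
  have hsumeq : (∑ k ∈ Finset.Icc 1 N,
      (cseq (n k) : ℝ) / (a (n k) * α ^ (n k) - b (n k) * β ^ (n k))) =
      ((∑ k ∈ Finset.Icc 1 N, cseq (n k) / v (n k) : ℚ) : ℝ) := by
    rw [Rat.cast_sum]
    apply Finset.sum_congr rfl
    intro k _
    rw [hv (n k), Rat.cast_div]
  rw [hsumeq, logHeight_rat]
  set S : ℚ := ∑ k ∈ Finset.Icc 1 N, cseq (n k) / v (n k) with hSdef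
  have hS1 := ratH_sum_le (fun k => cseq (n k) / v (n k)) N h1N
  have hSpos : (0:ℝ) < ratH S := lt_of_lt_of_le zero_lt_one (one_le_ratH S)
  have hprodpos : ∀ k ∈ Finset.Icc 1 N, ratH (cseq (n k) / v (n k)) ≠ 0 := by
    intro k _
    exact ne_of_gt (lt_of_lt_of_le zero_lt_one (one_le_ratH _))
  have hlog1 : Real.log (ratH S) ≤ (N:ℝ) * Real.log 2 +
      ∑ k ∈ Finset.Icc 1 N, Real.log (ratH (cseq (n k) / v (n k))) := by
    refine (Real.log_le_log hSpos hS1).trans_eq ?_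
    rw [Real.log_mul (pow_ne_zero N (two_ne_zero)) (Finset.prod_ne_zero_iff.2 hprodpos),
      Real.log_pow, Real.log_prod hprodpos]
  have hterm : ∀ k ∈ Finset.Icc 1 N, Real.log (ratH (cseq (n k) / v (n k))) ≤
      G (n k) - Real.log 2 + (n k : ℝ) * L := by
    intro k _
    have hd := ratH_div_le2 (cseq (n k)) (v (n k))
    have hpos1 : (0:ℝ) < ratH (cseq (n k) / v (n k)) :=
      lt_of_lt_of_le zero_lt_one (one_le_ratH _)
    have hlog2 : Real.log (ratH (cseq (n k) / v (n k))) ≤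
        Real.log (ratH (cseq (n k))) + Real.log (ratH (v (n k))) := by
      refine (Real.log_le_log hpos1 hd).trans_eq ?_
      rw [Real.log_mul (ne_of_gt (lt_of_lt_of_le zero_lt_one (one_le_ratH _)))
        (ne_of_gt (lt_of_lt_of_le zero_lt_one (one_le_ratH _)))]
    have hc1 : Real.log (ratH (cseq (n k))) = logHeight ((cseq (n k) : ℝ)) :=
      (logHeight_rat (cseq (n k))).symm
    have hk := key (n k)
    simp only [hGdef]
    rw [hc1] at hlog2
    linarith
  have hsum2 : ∑ k ∈ Finset.Icc 1 N, Real.log (ratH (cseq (n k) / v (n k))) ≤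
      ∑ k ∈ Finset.Icc 1 N, (G (n k) - Real.log 2 + (n k : ℝ) * L) :=
    Finset.sum_le_sum hterm
  have hcard : (∑ _k ∈ Finset.Icc 1 N, Real.log 2) = (N:ℝ) * Real.log 2 := by
    rw [Finset.sum_const, nsmul_eq_mul, Nat.card_Icc]
    norm_num
  have hsplit : (∑ k ∈ Finset.Icc 1 N, (G (n k) - Real.log 2 + (n k : ℝ) * L)) =
      (∑ k ∈ Finset.Icc 1 N, G (n k)) - (N:ℝ) * Real.log 2 +
        (∑ k ∈ Finset.Icc 1 N, (n k : ℝ)) * L := by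
    rw [Finset.sum_add_distrib, Finset.sum_sub_distrib, hcard, ← Finset.sum_mul]
  have hrhs : ((∑ k ∈ Finset.Icc 1 N, (n k : ℝ)) + ε * (n N : ℝ)) * L =
      (∑ k ∈ Finset.Icc 1 N, (n k : ℝ)) * L + ε * L * (n N : ℝ) := by ring
  rw [hrhs]
  rw [hsplit] at hsum2
  linarith
end

section
/- Let c > 2, Q a positive integer, and let n_1 < n_2 < ... satisfy n_{k+1}/n_k ≥ c and n_{k+1}/n_k ≤ 5 for all k. For subsets T of {1,...,Q}, define Σ(N,T) = ∑_{i∈T} n_{N-P+i} - ∑_{i∉T} n_{N-P+i} (for fixed P > Q and N large). Then for any two distinct subsets T ≠ T' of {1,...,Q}, |Σ(N,T) - Σ(N,T')| ≥ (2(c-2)/((c-1)·5^{P-1}))·n_N. -/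
open Finset

lemma geom_sum_le' (c : ℝ) (hc : 2 < c) (n : ℕ → ℕ)
    (hratio : ∀ k, 1 ≤ k → c * (n k : ℝ) ≤ (n (k + 1) : ℝ)) (a : ℕ) (ha : 1 ≤ a) :
    ∀ m, (c - 1) * ∑ k ∈ range m, (n (a + k) : ℝ) ≤ n (a + m) := by
  intro m
  induction m with
  | zero => simpa using (Nat.cast_nonneg (n a) : (0:ℝ) ≤ n a)
  | succ m ih =>
    rw [Finset.sum_range_succ, mul_add]
    have h1 : c * (n (a + m) : ℝ) ≤ n (a + m + 1) := hratio _ (by omega)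
    have h2 : (0:ℝ) ≤ n (a + m) := Nat.cast_nonneg _
    show (c-1) * ∑ k ∈ range m, (n (a + k) : ℝ) + (c-1) * (n (a+m) : ℝ) ≤ (n (a + m + 1) : ℝ)
    nlinarith

lemma five_bound' (n : ℕ → ℕ)
    (hratio5 : ∀ k, 1 ≤ k → (n (k + 1) : ℝ) ≤ 5 * (n k : ℝ)) (a : ℕ) (ha : 1 ≤ a) :
    ∀ m, (n (a + m) : ℝ) ≤ 5 ^ m * n a := by
  intro m
  induction m with
  | zero => simp
  | succ m ih =>
    have h1 := hratio5 (a + m) (by omega)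
    calc (n (a + m + 1) : ℝ) ≤ 5 * n (a + m) := h1
    _ ≤ 5 * (5 ^ m * n a) := by linarith
    _ = 5 ^ (m + 1) * n a := by ring

lemma key_gap (c : ℝ) (hc : 2 < c) (Q P : ℕ) (n : ℕ → ℕ)
    (hratio : ∀ k, 1 ≤ k → c * (n k : ℝ) ≤ (n (k + 1) : ℝ))
    (N : ℕ) (hN : P ≤ N) (A B : Finset ℕ) (hA : A ⊆ Finset.Icc 1 Q) (hB : B ⊆ Finset.Icc 1 Q)
    (j : ℕ) (hjA : j ∈ A \ B) (hmax : ∀ i ∈ B \ A, i < j) :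
    (c - 2) * (n (N - P + j) : ℝ) ≤
      (c - 1) * ((∑ i ∈ A, (n (N - P + i) : ℝ)) - ∑ i ∈ B, (n (N - P + i) : ℝ)) := by
  have hj1 : 1 ≤ j := (Finset.mem_Icc.mp (hA (Finset.mem_sdiff.mp hjA).1)).1
  have hsplit : (∑ i ∈ A, (n (N - P + i) : ℝ)) - ∑ i ∈ B, (n (N - P + i) : ℝ)
      = (∑ i ∈ A \ B, (n (N - P + i) : ℝ)) - ∑ i ∈ B \ A, (n (N - P + i) : ℝ) :=
    (Finset.sum_sdiff_sub_sum_sdiff ..).symm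
  have h1 : (n (N - P + j) : ℝ) ≤ ∑ i ∈ A \ B, (n (N - P + i) : ℝ) :=
    Finset.single_le_sum (f := fun i => (n (N - P + i) : ℝ)) (fun i _ => Nat.cast_nonneg _) hjA
  have hsub : B \ A ⊆ Finset.Icc 1 (j - 1) := by
    intro i hi
    have hij := hmax i hi
    have hi1 := (Finset.mem_Icc.mp (hB (Finset.mem_sdiff.mp hi).1)).1
    exact Finset.mem_Icc.mpr ⟨hi1, by omega⟩
  have h2 : ∑ i ∈ B \ A, (n (N - P + i) : ℝ) ≤ ∑ i ∈ Finset.Icc 1 (j-1), (n (N - P + i) : ℝ) :=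
    Finset.sum_le_sum_of_subset_of_nonneg hsub (fun i _ _ => Nat.cast_nonneg _)
  have h3 : ∑ i ∈ Finset.Icc 1 (j-1), (n (N - P + i) : ℝ)
      = ∑ k ∈ range (j - 1), (n (N - P + 1 + k) : ℝ) := by
    rw [← Finset.Ico_add_one_right_eq_Icc, Finset.sum_Ico_eq_sum_range,
      show j - 1 + 1 - 1 = j - 1 from by omega]
    exact Finset.sum_congr rfl
      (fun k _ => by rw [show N - P + (1 + k) = N - P + 1 + k from by omega])
  have h4 := geom_sum_le' c hc n hratio (N - P + 1) (by omega) (j - 1)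
  rw [show N - P + 1 + (j - 1) = N - P + j from by omega] at h4
  rw [hsplit]
  have hc1 : (0:ℝ) < c - 1 := by linarith
  nlinarith [Finset.sum_nonneg (f := fun i => (n (N - P + i) : ℝ)) (s := B \ A) (fun i _ => Nat.cast_nonneg _)]

/-- Let `c > 2`, `1 ≤ Q < P`, and `n_1 < n_2 < ...` with `c ≤ n_{k+1}/n_k ≤ 5`. For
`T ⊆ {1,...,Q}` set `Σ(N,T) = ∑_{i∈T} n_{N-P+i} - ∑_{i∉T} n_{N-P+i}`. Then for `N ≥ P`
and distinct subsets `T ≠ T'` of `{1,...,Q}`,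
`|Σ(N,T) - Σ(N,T')| ≥ (2(c-2)/((c-1)·5^{P-1}))·n_N`. -/
theorem signed_sums_gap (c : ℝ) (hc : 2 < c) (Q P : ℕ) (hQ : 1 ≤ Q) (hQP : Q < P)
    (n : ℕ → ℕ)
    (hpos : 0 < n 1)
    (hmono : ∀ k, 1 ≤ k → n k < n (k + 1))
    (hratio : ∀ k, 1 ≤ k → c * (n k : ℝ) ≤ (n (k + 1) : ℝ))
    (hratio5 : ∀ k, 1 ≤ k → (n (k + 1) : ℝ) ≤ 5 * (n k : ℝ)) :
    ∀ N, P ≤ N → ∀ T T' : Finset ℕ, T ⊆ Finset.Icc 1 Q → T' ⊆ Finset.Icc 1 Q → T ≠ T' →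
      |((∑ i ∈ T, (n (N - P + i) : ℝ)) - ∑ i ∈ Finset.Icc 1 Q \ T, (n (N - P + i) : ℝ)) -
        ((∑ i ∈ T', (n (N - P + i) : ℝ)) - ∑ i ∈ Finset.Icc 1 Q \ T', (n (N - P + i) : ℝ))| ≥
      (2 * (c - 2) / ((c - 1) * 5 ^ (P - 1))) * (n N : ℝ) := by
  intro N hN T T' hT hT' hne
  have hrw : ∀ S : Finset ℕ, S ⊆ Finset.Icc 1 Q →
      ∑ i ∈ Finset.Icc 1 Q \ S, (n (N - P + i) : ℝ)
        = ∑ i ∈ Finset.Icc 1 Q, (n (N - P + i) : ℝ) - ∑ i ∈ S, (n (N - P + i) : ℝ) :=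
    fun S hS => Finset.sum_sdiff_eq_sub hS
  rw [hrw T hT, hrw T' hT']
  have habs : ((∑ i ∈ T, (n (N - P + i) : ℝ)) -
        (∑ i ∈ Finset.Icc 1 Q, (n (N - P + i) : ℝ) - ∑ i ∈ T, (n (N - P + i) : ℝ))) -
      ((∑ i ∈ T', (n (N - P + i) : ℝ)) -
        (∑ i ∈ Finset.Icc 1 Q, (n (N - P + i) : ℝ) - ∑ i ∈ T', (n (N - P + i) : ℝ)))
      = 2 * (∑ i ∈ T, (n (N - P + i) : ℝ)) - 2 * (∑ i ∈ T', (n (N - P + i) : ℝ)) := by ring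
  rw [habs]
  have hD : ((T \ T') ∪ (T' \ T)).Nonempty := by
    rw [Finset.nonempty_iff_ne_empty]
    intro h
    rw [Finset.union_eq_empty] at h
    exact hne (Finset.Subset.antisymm (Finset.sdiff_eq_empty_iff_subset.mp h.1)
      (Finset.sdiff_eq_empty_iff_subset.mp h.2))
  set j := ((T \ T') ∪ (T' \ T)).max' hD with hjdef
  have hjmem := Finset.max'_mem _ hD
  have hle : ∀ i ∈ (T \ T') ∪ (T' \ T), i ≤ j := fun i hi => Finset.le_max' _ i hi
  have hc1 : (0:ℝ) < c - 1 := by linarith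
  have hc2 : (0:ℝ) ≤ c - 2 := by linarith
  have hpow : (0:ℝ) < 5 ^ (P - 1) := by positivity
  -- the main bound for the ordered case
  have main : ∀ A B : Finset ℕ, A ⊆ Finset.Icc 1 Q → B ⊆ Finset.Icc 1 Q →
      j ∈ A \ B → (∀ i ∈ B \ A, i < j) →
      (2 * (c - 2) / ((c - 1) * 5 ^ (P - 1))) * (n N : ℝ) ≤
        2 * (∑ i ∈ A, (n (N - P + i) : ℝ)) - 2 * (∑ i ∈ B, (n (N - P + i) : ℝ)) := by
    intro A B hA hB hjA hmax
    have key := key_gap c hc Q P n hratio N hN A B hA hB j hjA hmax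
    have hjQ := Finset.mem_Icc.mp (hA (Finset.mem_sdiff.mp hjA).1)
    have h5 := five_bound' n hratio5 (N - P + j) (by omega) (P - j)
    rw [show N - P + j + (P - j) = N from by omega] at h5
    have hfj : (0:ℝ) ≤ n (N - P + j) := Nat.cast_nonneg _
    have h5' : (n N : ℝ) ≤ 5 ^ (P - 1) * n (N - P + j) := by
      refine h5.trans (mul_le_mul_of_nonneg_right ?_ hfj)
      exact pow_le_pow_right₀ (by norm_num) (by omega)
    rw [div_mul_eq_mul_div, div_le_iff₀ (by positivity)]
    have e1 : 2 * (c - 2) * (n N : ℝ) ≤ 2 * (c - 2) * (5 ^ (P - 1) * n (N - P + j)) :=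
      mul_le_mul_of_nonneg_left h5' (by linarith)
    have e2 : 2 * (5 ^ (P - 1) : ℝ) * ((c - 2) * n (N - P + j)) ≤
        2 * (5 ^ (P - 1) : ℝ) * ((c - 1) * ((∑ i ∈ A, (n (N - P + i) : ℝ)) -
          ∑ i ∈ B, (n (N - P + i) : ℝ))) :=
      mul_le_mul_of_nonneg_left key (by positivity)
    nlinarith
  rcases Finset.mem_union.mp hjmem with hj | hj
  · have hmax : ∀ i ∈ T' \ T, i < j := by
      intro i hi
      have hij := hle i (Finset.mem_union_right _ hi)
      have : i ≠ j := by
        intro h; subst h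
        exact (Finset.mem_sdiff.mp hj).2 (Finset.mem_sdiff.mp hi).1
      omega
    exact le_trans (main T T' hT hT' hj hmax) (le_abs_self _)
  · have hmax : ∀ i ∈ T \ T', i < j := by
      intro i hi
      have hij := hle i (Finset.mem_union_left _ hi)
      have : i ≠ j := by
        intro h; subst h
        exact (Finset.mem_sdiff.mp hj).2 (Finset.mem_sdiff.mp hi).1
      omega
    rw [show 2 * (∑ i ∈ T, (n (N - P + i) : ℝ)) - 2 * (∑ i ∈ T', (n (N - P + i) : ℝ))
        = -(2 * (∑ i ∈ T', (n (N - P + i) : ℝ)) - 2 * (∑ i ∈ T, (n (N - P + i) : ℝ))) from by ring,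
      abs_neg]
    exact le_trans (main T' T hT' hT hj hmax) (le_abs_self _)
end
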